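/- arXiv:1402.0441 — 4 statements merged into one kernel-verified Lean document; each statement's English description precedes it below -/
import Mathlib

section
/- Let φ be a lower semicontinuous submeasure on ℕ such that Exh(φ) = Fin(φ), i.e. for every A ⊆ ℕ: φ(A \ [0,N)) → 0 as N → ∞ if and only if φ(A) < ∞; let J = Exh(φ) and assume J is tall (every infinite subset of ℕ contains an infinite element of J). If J is representable in c₀ (there exists h : ℕ → c₀ such that for every A ⊆ ℕ, A ∈ J iff ∑_{n∈A} h(n) converges unconditionally in c₀), then J is a summable ideal: there exists g : ℕ → [0,∞) such that for every A ⊆ ℕ, A ∈ J iff ∑_{n∈A} g(n) < ∞. (A tall F_σ P-ideal is representable in c₀ iff it is a summable ideal.) -/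
open Filter Topology Set
open scoped ZeroAtInfty ENNReal

set_option maxHeartbeats 2000000

section Stmt13Aux

noncomputable def s13mu (h : ℕ → C₀(ℕ, ℝ)) (k : ℕ) (S : Set ℕ) : ℝ≥0∞ :=
  ∑' n : ℕ, S.indicator (fun n => ENNReal.ofReal |h n k|) n

noncomputable def s13nu (h : ℕ → C₀(ℕ, ℝ)) (S : Set ℕ) : ℝ≥0∞ := ⨆ k, s13mu h k S

lemma s13mu_mono {h : ℕ → C₀(ℕ, ℝ)} {k : ℕ} {S T : Set ℕ} (hST : S ⊆ T) :
    s13mu h k S ≤ s13mu h k T :=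
  ENNReal.tsum_le_tsum fun n => Set.indicator_le_indicator_of_subset hST (fun _ => zero_le) n

lemma s13nu_mono {h : ℕ → C₀(ℕ, ℝ)} {S T : Set ℕ} (hST : S ⊆ T) :
    s13nu h S ≤ s13nu h T :=
  iSup_mono fun _ => s13mu_mono hST

lemma s13mu_finset (h : ℕ → C₀(ℕ, ℝ)) (k : ℕ) (F : Finset ℕ) :
    s13mu h k ↑F = ∑ n ∈ F, ENNReal.ofReal |h n k| := by
  classical
  rw [s13mu, tsum_eq_sum (s := F) (fun n hn => Set.indicator_of_notMem (by simpa using hn) _)]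
  exact Finset.sum_congr rfl fun n hn => Set.indicator_of_mem (by simpa using hn) _

lemma s13sum_le_mu {h : ℕ → C₀(ℕ, ℝ)} {k : ℕ} {S : Set ℕ} {F : Finset ℕ} (hF : ↑F ⊆ S) :
    ∑ n ∈ F, ENNReal.ofReal |h n k| ≤ s13mu h k S := by
  rw [← s13mu_finset]; exact s13mu_mono hF

lemma s13mu_le_of_forall_sum_le {h : ℕ → C₀(ℕ, ℝ)} {k : ℕ} {S : Set ℕ} {c : ℝ≥0∞}
    (hc : ∀ F : Finset ℕ, ↑F ⊆ S → ∑ n ∈ F, ENNReal.ofReal |h n k| ≤ c) :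
    s13mu h k S ≤ c := by
  classical
  rw [s13mu, ENNReal.tsum_eq_iSup_sum]
  refine iSup_le fun F => ?_
  calc ∑ n ∈ F, S.indicator (fun n => ENNReal.ofReal |h n k|) n
      = ∑ n ∈ F.filter (· ∈ S), ENNReal.ofReal |h n k| := by
        rw [Finset.sum_filter]
        exact Finset.sum_congr rfl fun n _ => by
          by_cases hn : n ∈ S <;> simp [Set.indicator_apply, hn]
    _ ≤ c := hc _ (by intro n hn; simpa using (Finset.mem_filter.mp (by simpa using hn)).2)

lemma s13exists_finset_lt_mu {h : ℕ → C₀(ℕ, ℝ)} {k : ℕ} {S : Set ℕ} {c : ℝ≥0∞}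
    (hc : c < s13mu h k S) :
    ∃ F : Finset ℕ, ↑F ⊆ S ∧ c < ∑ n ∈ F, ENNReal.ofReal |h n k| := by
  by_contra hcon
  push_neg at hcon
  exact absurd (s13mu_le_of_forall_sum_le fun F hF => hcon F hF) (not_le.mpr hc)

lemma s13mu_union_le (h : ℕ → C₀(ℕ, ℝ)) (k : ℕ) (S T : Set ℕ) :
    s13mu h k (S ∪ T) ≤ s13mu h k S + s13mu h k T := by
  rw [s13mu, s13mu, s13mu, ← ENNReal.tsum_add]
  refine ENNReal.tsum_le_tsum fun n => ?_
  by_cases hS : n ∈ S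
  · by_cases hT : n ∈ T <;> simp [Set.indicator_apply, hS, hT]
  · by_cases hT : n ∈ T <;> simp [Set.indicator_apply, hS, hT]

lemma s13mu_iUnion_le (h : ℕ → C₀(ℕ, ℝ)) (k : ℕ) (S : ℕ → Set ℕ) :
    s13mu h k (⋃ i, S i) ≤ ∑' i, s13mu h k (S i) := by
  rw [s13mu]
  have hpt : ∀ n, (⋃ i, S i).indicator (fun n => ENNReal.ofReal |h n k|) n ≤
      ∑' i, (S i).indicator (fun n => ENNReal.ofReal |h n k|) n := by
    intro n
    by_cases hn : n ∈ ⋃ i, S i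
    · obtain ⟨i, hi⟩ := Set.mem_iUnion.mp hn
      rw [Set.indicator_of_mem hn]
      refine le_trans ?_ (ENNReal.le_tsum i)
      rw [Set.indicator_of_mem hi]
    · simp [Set.indicator_of_notMem hn]
  calc ∑' n, (⋃ i, S i).indicator (fun n => ENNReal.ofReal |h n k|) n
      ≤ ∑' n, ∑' i, (S i).indicator (fun n => ENNReal.ofReal |h n k|) n :=
        ENNReal.tsum_le_tsum hpt
    _ = ∑' i, ∑' n, (S i).indicator (fun n => ENNReal.ofReal |h n k|) n := ENNReal.tsum_comm
    _ = ∑' i, s13mu h k (S i) := rfl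

lemma s13eval_sum {ι : Type*} (t : Finset ι) (f : ι → C₀(ℕ, ℝ)) (k : ℕ) :
    (∑ i ∈ t, f i) k = ∑ i ∈ t, (f i) k :=
  map_sum (AddMonoidHom.mk' (fun x : C₀(ℕ, ℝ) => x k) (fun _ _ => rfl)) f t


lemma s13abs_apply_le (x : C₀(ℕ, ℝ)) (k : ℕ) : |x k| ≤ ‖x‖ := by
  rw [← ZeroAtInftyContinuousMap.norm_toBCF_eq_norm]
  exact x.toBCF.norm_coe_le_norm k

lemma s13norm_le (x : C₀(ℕ, ℝ)) (C : ℝ) (hC : 0 ≤ C) (hx : ∀ k, |x k| ≤ C) : ‖x‖ ≤ C := by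
  rw [← ZeroAtInftyContinuousMap.norm_toBCF_eq_norm]
  exact (BoundedContinuousFunction.norm_le hC).mpr hx

lemma s13char (h : ℕ → C₀(ℕ, ℝ)) (A : Set ℕ) :
    Summable (fun n : A => h n) ↔
      Tendsto (fun N : ℕ => s13nu h (A \ Set.Iio N)) atTop (𝓝 0) := by
  classical
  constructor
  · intro hs
    rw [ENNReal.tendsto_atTop_zero]
    intro ε hε
    obtain ⟨r, hr0, hrε⟩ : ∃ r : ℝ, 0 < r ∧ ENNReal.ofReal (2 * r) ≤ ε := by
      rcases eq_or_ne ε ⊤ with rfl | hne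
      · exact ⟨1, one_pos, le_top⟩
      · have htr : 0 < ε.toReal := ENNReal.toReal_pos hε.ne' hne
        refine ⟨ε.toReal / 4, by positivity, ?_⟩
        rw [show 2 * (ε.toReal / 4) = ε.toReal / 2 by ring]
        calc ENNReal.ofReal (ε.toReal / 2) ≤ ENNReal.ofReal ε.toReal :=
              ENNReal.ofReal_le_ofReal (by linarith)
          _ = ε := ENNReal.ofReal_toReal hne
    obtain ⟨s, hsmall⟩ := summable_iff_vanishing_norm.mp hs r hr0
    refine ⟨(s.sup fun a => (a : ℕ)) + 1, fun N hN => ?_⟩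
    refine le_trans (iSup_le fun k => s13mu_le_of_forall_sum_le fun F hF => ?_) hrε
    have hFA : ∀ x ∈ F, x ∈ A := fun x hx => (hF hx).1
    have hFN : ∀ x ∈ F, N ≤ x := by
      intro x hx
      have := (hF hx).2
      simpa [Set.mem_Iio, not_lt] using this
    set t : Finset A := F.attach.image (fun x => (⟨x.1, hFA x.1 x.2⟩ : A)) with ht
    have hmemt : ∀ a : A, a ∈ t → (a : ℕ) ∈ F := by
      intro a ha
      rw [ht, Finset.mem_image] at ha
      obtain ⟨x, hx, rfl⟩ := ha
      exact x.2
    have hsumt : ∀ v : ℕ → ℝ, ∑ a ∈ t, v ↑a = ∑ n ∈ F, v n := by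
      intro v
      rw [ht, Finset.sum_image (fun x _ y _ hxy =>
        Subtype.ext (by simpa using congrArg Subtype.val hxy))]
      exact Finset.sum_attach F fun n => v n
    -- disjointness from s for any subset of t
    have hdisj : ∀ u : Finset A, u ⊆ t → Disjoint u s := by
      intro u hu
      rw [Finset.disjoint_left]
      intro a hau has
      have h1 : N ≤ (a : ℕ) := hFN _ (hmemt a (hu hau))
      have h2 : (a : ℕ) ≤ s.sup fun a => (a : ℕ) := Finset.le_sup has
      omega
    have hbound : ∀ u : Finset A, u ⊆ t → (∑ a ∈ u, h ↑a k) < r := by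
      intro u hu
      calc ∑ a ∈ u, h ↑a k = (∑ a ∈ u, h ↑a) k := (s13eval_sum _ _ _).symm
        _ ≤ |(∑ a ∈ u, h ↑a) k| := le_abs_self _
        _ ≤ ‖∑ a ∈ u, h ↑a‖ := s13abs_apply_le _ _
        _ < r := hsmall _ (hdisj _ hu)
    have hboundneg : ∀ u : Finset A, u ⊆ t → (∑ a ∈ u, -(h ↑a k)) < r := by
      intro u hu
      have : ∑ a ∈ u, -(h ↑a k) = -((∑ a ∈ u, h ↑a) k) := by
        rw [s13eval_sum, Finset.sum_neg_distrib]
      calc ∑ a ∈ u, -(h ↑a k) = -((∑ a ∈ u, h ↑a) k) := this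
        _ ≤ |(∑ a ∈ u, h ↑a) k| := neg_le_abs _
        _ ≤ ‖∑ a ∈ u, h ↑a‖ := s13abs_apply_le _ _
        _ < r := hsmall _ (hdisj _ hu)
    have hreal : ∑ n ∈ F, |h n k| ≤ 2 * r := by
      have hsplit := Finset.sum_filter_add_sum_filter_not t
        (fun a => 0 ≤ h ↑a k) (fun a => |h ↑a k|)
      have hPeq : ∑ a ∈ t.filter (fun a : ↥A => 0 ≤ h ↑a k), |h ↑a k|
          = ∑ a ∈ t.filter (fun a : ↥A => 0 ≤ h ↑a k), h ↑a k :=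
        Finset.sum_congr rfl fun a ha => abs_of_nonneg (Finset.mem_filter.mp ha).2
      have hMeq : ∑ a ∈ t.filter (fun a : ↥A => ¬ 0 ≤ h ↑a k), |h ↑a k|
          = ∑ a ∈ t.filter (fun a : ↥A => ¬ 0 ≤ h ↑a k), -(h ↑a k) :=
        Finset.sum_congr rfl fun a ha => abs_of_neg (not_le.mp (Finset.mem_filter.mp ha).2)
      have hP := hbound _ (Finset.filter_subset (fun a : ↥A => 0 ≤ h ↑a k) t)
      have hM := hboundneg _ (Finset.filter_subset (fun a : ↥A => ¬ 0 ≤ h ↑a k) t)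
      rw [← hsumt fun n => |h n k|, ← hsplit, hPeq, hMeq]
      linarith
    calc ∑ n ∈ F, ENNReal.ofReal |h n k|
        = ENNReal.ofReal (∑ n ∈ F, |h n k|) :=
          (ENNReal.ofReal_sum_of_nonneg fun i _ => abs_nonneg _).symm
      _ ≤ ENNReal.ofReal (2 * r) := ENNReal.ofReal_le_ofReal hreal
  · intro htend
    rw [summable_iff_vanishing_norm]
    intro r hr0
    obtain ⟨N, hN⟩ := ENNReal.tendsto_atTop_zero.mp htend (ENNReal.ofReal (r / 2))
      (ENNReal.ofReal_pos.mpr (by linarith))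
    refine ⟨(Finset.range N).subtype (· ∈ A), fun t hdis => ?_⟩
    have hge : ∀ a : A, a ∈ t → N ≤ (a : ℕ) := by
      intro a ha
      by_contra hlt
      exact (Finset.disjoint_left.mp hdis ha) (by
        rw [Finset.mem_subtype]; exact Finset.mem_range.mpr (not_le.mp hlt))
    have hnorm : ‖∑ a ∈ t, h ↑a‖ ≤ r / 2 := by
      refine s13norm_le _ _ (by linarith) fun k => ?_
      rw [s13eval_sum]
      have h1 : |∑ a ∈ t, h ↑a k| ≤ ∑ a ∈ t, |h ↑a k| := Finset.abs_sum_le_sum_abs _ _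
      have h2 : ∑ a ∈ t, ENNReal.ofReal |h ↑a k| ≤ ENNReal.ofReal (r / 2) := by
        set F : Finset ℕ := t.image (fun a : ↥A => (a : ℕ)) with hF
        have hsum : ∑ n ∈ F, ENNReal.ofReal |h n k| = ∑ a ∈ t, ENNReal.ofReal |h ↑a k| := by
          rw [hF]; exact Finset.sum_image fun x _ y _ hxy => Subtype.ext hxy
        rw [← hsum]
        refine le_trans (s13sum_le_mu ?_) (le_trans (le_iSup (fun k => s13mu h k (A \ Set.Iio N)) k) (hN N le_rfl))
        intro x hx
        rw [hF] at hx
        simp only [Finset.coe_image, Set.mem_image] at hx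
        obtain ⟨a, ha, rfl⟩ := hx
        exact ⟨a.2, by simp [Set.mem_Iio, not_lt]; exact hge a (by simpa using ha)⟩
      have h3 : ∑ a ∈ t, |h ↑a k| ≤ r / 2 := by
        rw [← ENNReal.ofReal_le_ofReal_iff (by linarith),
          ENNReal.ofReal_sum_of_nonneg fun i _ => abs_nonneg _]
        exact h2
      linarith [abs_le.mp (le_trans h1 h3)]
    calc ‖∑ a ∈ t, h ↑a‖ ≤ r / 2 := hnorm
      _ < r := by linarith


lemma s13rows (φ : Set ℕ → ℝ≥0∞) (h : ℕ → C₀(ℕ, ℝ))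
    (hrep : ∀ A : Set ℕ,
      Tendsto (fun N : ℕ => φ (A \ Set.Iio N)) atTop (𝓝 0) ↔ Summable (fun n : A => h n))
    (htall : ∀ B : Set ℕ, B.Infinite →
      ∃ C : Set ℕ, C ⊆ B ∧ C.Infinite ∧
        Tendsto (fun N : ℕ => φ (C \ Set.Iio N)) atTop (𝓝 0))
    (r : ℝ) (hr : 0 < r) : {n : ℕ | r ≤ ‖h n‖}.Finite := by
  by_contra hinf
  obtain ⟨C, hCB, hCinf, hCZ⟩ := htall _ hinf
  have hsum : Summable (fun n : C => h ↑n) := (hrep C).mp hCZ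
  haveI : Infinite ↥C := hCinf.to_subtype
  have htend := hsum.tendsto_cofinite_zero
  have hev : ∀ᶠ (n : ↥C) in cofinite, dist (h ↑n) 0 < r :=
    Metric.tendsto_nhds.mp htend r hr
  obtain ⟨n, hn⟩ := hev.exists
  rw [dist_zero_right] at hn
  exact absurd (hCB n.2) (by simpa using not_le.mpr hn)

lemma s13unif (φ : Set ℕ → ℝ≥0∞) (h : ℕ → C₀(ℕ, ℝ))
    (hmono : ∀ A B : Set ℕ, A ⊆ B → φ A ≤ φ B)
    (hlsc : ∀ A : Set ℕ, φ A = ⨆ (F : Finset ℕ) (_ : ↑F ⊆ A), φ ↑F)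
    (hExhFin : ∀ A : Set ℕ,
      Tendsto (fun N : ℕ => φ (A \ Set.Iio N)) atTop (𝓝 0) ↔ φ A < ⊤)
    (hrep : ∀ A : Set ℕ,
      Tendsto (fun N : ℕ => φ (A \ Set.Iio N)) atTop (𝓝 0) ↔ Summable (fun n : A => h n)) :
    ∃ δ : ℝ≥0∞, 0 < δ ∧ δ ≠ ⊤ ∧ ∀ B : Set ℕ, s13nu h B ≤ δ →
      Tendsto (fun N : ℕ => s13nu h (B \ Set.Iio N)) atTop (𝓝 0) := by
  have h2pos : (0 : ℝ≥0∞) < 2⁻¹ := ENNReal.inv_pos.mpr (by norm_num)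
  have h2ne : (2⁻¹ : ℝ≥0∞) ≠ ⊤ := ENNReal.inv_ne_top.mpr (by norm_num)
  by_contra hcon
  push_neg at hcon
  have hbad : ∀ m : ℕ, ∃ F : Finset ℕ, s13nu h ↑F ≤ (2 : ℝ≥0∞)⁻¹ ^ (2 * m) ∧
      (m : ℝ≥0∞) < φ ↑F := by
    intro m
    obtain ⟨B, hB1, hB2⟩ := hcon ((2 : ℝ≥0∞)⁻¹ ^ (2 * m)) (ENNReal.pow_pos h2pos _)
      (ENNReal.pow_ne_top h2ne)
    have hnotZ : ¬ Tendsto (fun N : ℕ => φ (B \ Set.Iio N)) atTop (𝓝 0) := fun hT =>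
      hB2 ((s13char h B).mp ((hrep B).mp hT))
    have hφtop : φ B = ⊤ := by
      by_contra hne
      exact hnotZ ((hExhFin B).mpr (lt_top_iff_ne_top.mpr hne))
    have hm : (m : ℝ≥0∞) < ⨆ (F : Finset ℕ) (_ : ↑F ⊆ B), φ ↑F := by
      rw [← hlsc B, hφtop]
      exact ENNReal.natCast_lt_top m -- m < ⊤
    rw [lt_iSup_iff] at hm
    obtain ⟨F, hF⟩ := hm
    rw [lt_iSup_iff] at hF
    obtain ⟨hFB, hFm⟩ := hF
    exact ⟨F, le_trans (s13nu_mono hFB) hB1, hFm⟩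
  choose F hF1 hF2 using hbad
  set C : Set ℕ := ⋃ m, (F m : Set ℕ) with hC
  have hCZ : Tendsto (fun N : ℕ => s13nu h (C \ Set.Iio N)) atTop (𝓝 0) := by
    rw [ENNReal.tendsto_atTop_zero]
    intro ε hε
    obtain ⟨n₀, hn₀⟩ := ENNReal.exists_inv_two_pow_lt hε.ne'
    set M := n₀ + 1 with hM
    set N₀ := (Finset.range M).sup (fun m => (F m).sup id) + 1 with hN₀
    refine ⟨N₀, fun N hN => ?_⟩
    have hsub : ∀ k, s13mu h k (C \ Set.Iio N) ≤ (2 : ℝ≥0∞)⁻¹ ^ M * 2 := by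
      intro k
      have hdiff : C \ Set.Iio N = ⋃ m, ((F m : Set ℕ) \ Set.Iio N) := by
        rw [hC, Set.iUnion_diff]
      rw [hdiff]
      refine le_trans (s13mu_iUnion_le h k _) ?_
      have hptw : ∀ m, s13mu h k ((F m : Set ℕ) \ Set.Iio N) ≤
          (2 : ℝ≥0∞)⁻¹ ^ M * (2 : ℝ≥0∞)⁻¹ ^ m := by
        intro m
        by_cases hm : m < M
        · have hempty : (F m : Set ℕ) \ Set.Iio N = (∅ : Set ℕ) := by
            ext x
            simp only [Set.mem_diff, Set.mem_Iio, Finset.mem_coe, Set.mem_empty_iff_false,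
              iff_false, not_and, not_not]
            intro hx
            have : x ≤ (Finset.range M).sup (fun m => (F m).sup id) :=
              le_trans (Finset.le_sup (f := id) hx) (Finset.le_sup (f := fun m => (F m).sup id) (Finset.mem_range.mpr hm))
            omega
          rw [hempty]
          simp [s13mu]
        · push_neg at hm
          have h1 : s13mu h k ((F m : Set ℕ) \ Set.Iio N) ≤ s13nu h ↑(F m) :=
            le_trans (s13mu_mono Set.diff_subset) (le_iSup (fun k => s13mu h k ↑(F m)) k)
          refine le_trans (le_trans h1 (hF1 m)) ?_
          have : (2 : ℝ≥0∞)⁻¹ ^ (2 * m) = 2⁻¹ ^ m * 2⁻¹ ^ m := by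
            rw [← pow_add]; ring_nf
          rw [this]
          exact mul_le_mul_left (pow_le_pow_of_le_one zero_le
            (ENNReal.inv_le_one.mpr (by norm_num)) hm) _
      refine le_trans (ENNReal.tsum_le_tsum hptw) ?_
      rw [ENNReal.tsum_mul_left, ENNReal.tsum_geometric]
      rw [ENNReal.one_sub_inv_two, inv_inv]
    have hfin : s13nu h (C \ Set.Iio N) ≤ (2 : ℝ≥0∞)⁻¹ ^ M * 2 := iSup_le hsub
    refine le_trans hfin (le_of_lt ?_)
    calc (2 : ℝ≥0∞)⁻¹ ^ M * 2 = (2 : ℝ≥0∞)⁻¹ ^ n₀ * (2⁻¹ * 2) := by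
          rw [hM, pow_succ, mul_assoc]
      _ = (2 : ℝ≥0∞)⁻¹ ^ n₀ := by
          rw [ENNReal.inv_mul_cancel (by norm_num) (by norm_num), mul_one]
      _ < ε := hn₀
  have hφC : φ C < ⊤ := (hExhFin C).mp ((hrep C).mpr ((s13char h C).mpr hCZ))
  obtain ⟨n, hn⟩ := ENNReal.exists_nat_gt hφC.ne
  have hsubC : φ ↑(F n) ≤ φ C := hmono _ _ (by rw [hC]; exact Set.subset_iUnion (fun m => ((F m : Set ℕ))) n)
  exact absurd (lt_of_lt_of_le (hF2 n) hsubC) (not_lt.mpr hn.le)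


lemma s13block {h : ℕ → C₀(ℕ, ℝ)} {A : Set ℕ} {ε β : ℝ≥0∞} (hε : 0 < ε) (hβ : β ≠ ⊤)
    (m : ℕ) (hsmall : ∀ n, m ≤ n → ∀ k, ENNReal.ofReal |h n k| ≤ β)
    (hbig : ε < s13nu h (A \ Set.Iio m)) :
    ∃ (H : Finset ℕ) (k : ℕ), ↑H ⊆ A \ Set.Iio m ∧
      ε < ∑ n ∈ H, ENNReal.ofReal |h n k| ∧
      ∀ k', ∑ n ∈ H, ENNReal.ofReal |h n k'| ≤ ε + β := by
  classical
  have hne : ∃ c : ℕ, ∃ H : Finset ℕ, ∃ k : ℕ, H.card = c ∧ ↑H ⊆ A \ Set.Iio m ∧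
      ε < ∑ n ∈ H, ENNReal.ofReal |h n k| := by
    rw [s13nu, lt_iSup_iff] at hbig
    obtain ⟨k, hk⟩ := hbig
    obtain ⟨F, hF1, hF2⟩ := s13exists_finset_lt_mu hk
    exact ⟨F.card, F, k, rfl, hF1, hF2⟩
  obtain ⟨H, k, hcard, hsub, hgt⟩ := Nat.find_spec hne
  refine ⟨H, k, hsub, hgt, fun k' => ?_⟩
  by_contra hk'
  push_neg at hk'
  have hHne : H.Nonempty := by
    rcases Finset.eq_empty_or_nonempty H with rfl | hne'
    · simp only [Finset.sum_empty] at hk'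
      exact absurd hk' (by simp)
    · exact hne'
  obtain ⟨n₀, hn₀⟩ := hHne
  have hn₀m : m ≤ n₀ := by
    have := hsub hn₀
    simp only [Set.mem_diff, Set.mem_Iio, not_lt] at this
    exact this.2
  have hterm : ENNReal.ofReal |h n₀ k'| ≤ β := hsmall n₀ hn₀m k'
  have hsum : ∑ n ∈ H, ENNReal.ofReal |h n k'|
      = (∑ n ∈ H.erase n₀, ENNReal.ofReal |h n k'|) + ENNReal.ofReal |h n₀ k'| :=
    (Finset.sum_erase_add H _ hn₀).symm
  have hgt' : ε < ∑ n ∈ H.erase n₀, ENNReal.ofReal |h n k'| := by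
    have h1 : ε + β < (∑ n ∈ H.erase n₀, ENNReal.ofReal |h n k'|) + β := by
      calc ε + β < ∑ n ∈ H, ENNReal.ofReal |h n k'| := hk'
        _ = (∑ n ∈ H.erase n₀, ENNReal.ofReal |h n k'|) + ENNReal.ofReal |h n₀ k'| := hsum
        _ ≤ (∑ n ∈ H.erase n₀, ENNReal.ofReal |h n k'|) + β := add_le_add_right hterm _
    exact (ENNReal.add_lt_add_iff_right hβ).mp h1
  have hmin := Nat.find_min hne (m := (H.erase n₀).card) (by
    rw [Finset.card_erase_of_mem hn₀, hcard]
    have : 1 ≤ H.card := Finset.card_pos.mpr ⟨n₀, hn₀⟩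
    omega)
  exact hmin ⟨H.erase n₀, k', rfl, le_trans (Finset.coe_subset.mpr (Finset.erase_subset _ _)) hsub, hgt'⟩


lemma s13main (φ : Set ℕ → ℝ≥0∞) (h : ℕ → C₀(ℕ, ℝ))
    (hmono : ∀ A B : Set ℕ, A ⊆ B → φ A ≤ φ B)
    (hlsc : ∀ A : Set ℕ, φ A = ⨆ (F : Finset ℕ) (_ : ↑F ⊆ A), φ ↑F)
    (hExhFin : ∀ A : Set ℕ,
      Tendsto (fun N : ℕ => φ (A \ Set.Iio N)) atTop (𝓝 0) ↔ φ A < ⊤)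
    (htall : ∀ B : Set ℕ, B.Infinite →
      ∃ C : Set ℕ, C ⊆ B ∧ C.Infinite ∧
        Tendsto (fun N : ℕ => φ (C \ Set.Iio N)) atTop (𝓝 0))
    (hrep : ∀ A : Set ℕ,
      Tendsto (fun N : ℕ => φ (A \ Set.Iio N)) atTop (𝓝 0) ↔ Summable (fun n : A => h n))
    (A : Set ℕ) (hfin : ∀ k, s13mu h k A ≠ ⊤) :
    Tendsto (fun N : ℕ => s13nu h (A \ Set.Iio N)) atTop (𝓝 0) := by
  classical
  by_contra hnot
  obtain ⟨δ, hδ0, hδtop, hU⟩ := s13unif φ h hmono hlsc hExhFin hrep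
  -- convenient fractions of δ
  set δ2 : ℝ≥0∞ := δ / 2 with hδ2
  set δ4 : ℝ≥0∞ := δ2 / 2 with hδ4
  set δ8 : ℝ≥0∞ := δ4 / 2 with hδ8
  set δ16 : ℝ≥0∞ := δ8 / 2 with hδ16
  have hδ2top : δ2 ≠ ⊤ := by
    rw [hδ2]; exact (ENNReal.div_lt_top hδtop (by norm_num)).ne
  have hδ4top : δ4 ≠ ⊤ := by
    rw [hδ4]; exact (ENNReal.div_lt_top hδ2top (by norm_num)).ne
  have hδ8top : δ8 ≠ ⊤ := by
    rw [hδ8]; exact (ENNReal.div_lt_top hδ4top (by norm_num)).ne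
  have hδ16top : δ16 ≠ ⊤ := by
    rw [hδ16]; exact (ENNReal.div_lt_top hδ8top (by norm_num)).ne
  have hδ2pos : 0 < δ2 := ENNReal.div_pos hδ0.ne' (by norm_num)
  have hδ4pos : 0 < δ4 := ENNReal.div_pos hδ2pos.ne' (by norm_num)
  have hδ8pos : 0 < δ8 := ENNReal.div_pos hδ4pos.ne' (by norm_num)
  have hδ16pos : 0 < δ16 := ENNReal.div_pos hδ8pos.ne' (by norm_num)
  -- β-smallness of far rows
  have hβreal : 0 < δ16.toReal := ENNReal.toReal_pos hδ16pos.ne' hδ16top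
  obtain ⟨m₀, hm₀⟩ : ∃ m₀ : ℕ, ∀ n, m₀ ≤ n → ∀ k, ENNReal.ofReal |h n k| ≤ δ16 := by
    have hfinite := s13rows φ h hrep htall δ16.toReal hβreal
    obtain ⟨b, hb⟩ := hfinite.bddAbove
    refine ⟨b + 1, fun n hn k => ?_⟩
    have hnot : n ∉ {n : ℕ | δ16.toReal ≤ ‖h n‖} := by
      intro hmem
      exact absurd (hb hmem) (by omega)
    have hlt : ‖h n‖ < δ16.toReal := not_le.mp hnot
    calc ENNReal.ofReal |h n k| ≤ ENNReal.ofReal ‖h n‖ := by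
          apply ENNReal.ofReal_le_ofReal
          rw [← ZeroAtInftyContinuousMap.norm_toBCF_eq_norm]
          exact (h n).toBCF.norm_coe_le_norm k
      _ ≤ ENNReal.ofReal δ16.toReal := ENNReal.ofReal_le_ofReal hlt.le
      _ = δ16 := ENNReal.ofReal_toReal hδ16top
  -- the liminf L is positive
  have hanti : Antitone (fun N : ℕ => s13nu h (A \ Set.Iio N)) := by
    intro N N' hNN'
    exact s13nu_mono (Set.diff_subset_diff_right (Set.Iio_subset_Iio hNN'))
  have htendinf := tendsto_atTop_iInf hanti
  set L : ℝ≥0∞ := ⨅ N : ℕ, s13nu h (A \ Set.Iio N) with hL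
  have hL0 : L ≠ 0 := by
    intro h0
    rw [hL] at h0
    exact hnot (h0 ▸ htendinf)
  set ε : ℝ≥0∞ := min (L / 2) δ8 with hε
  have hε0 : 0 < ε := lt_min (ENNReal.div_pos hL0 (by norm_num)) hδ8pos
  have hεtop : ε ≠ ⊤ := ne_top_of_le_ne_top hδ8top (min_le_right _ _)
  have hεlt : ∀ N : ℕ, ε < s13nu h (A \ Set.Iio N) := by
    intro N
    have hLτ : L ≤ s13nu h (A \ Set.Iio N) := iInf_le _ N
    rcases eq_or_ne L ⊤ with htop | hne
    · calc ε < ⊤ := hεtop.lt_top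
        _ = L := htop.symm
        _ ≤ _ := hLτ
    · calc ε ≤ L / 2 := min_le_left _ _
        _ < L := ENNReal.half_lt_self hL0 hne
        _ ≤ _ := hLτ
  -- blocks
  have hblocks : ∀ m : ℕ, ∃ (H : Finset ℕ) (k : ℕ), ↑H ⊆ A \ Set.Iio (max m m₀) ∧
      ε < ∑ n ∈ H, ENNReal.ofReal |h n k| ∧
      ∀ k', ∑ n ∈ H, ENNReal.ofReal |h n k'| ≤ ε + δ16 := fun m =>
    s13block hε0 hδ16top (max m m₀)
      (fun n hn k => hm₀ n (le_trans (le_max_right _ _) hn) k) (hεlt (max m m₀))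
  choose Hm km hm1 hm2 hm3 using hblocks
  -- positions
  set pos : ℕ → ℕ := fun i => Nat.rec 0 (fun _ p => (Hm p).sup id + p + 1) i with hpos
  have hpos_succ : ∀ i, pos (i + 1) = (Hm (pos i)).sup id + pos i + 1 := fun i => rfl
  -- block sequence
  set B : ℕ → Finset ℕ := fun i => Hm (pos i) with hB
  set w : ℕ → ℕ := fun i => km (pos i) with hw
  have hBsub : ∀ i, ↑(B i) ⊆ A \ Set.Iio (max (pos i) m₀) := fun i => hm1 (pos i)
  have hBsubA : ∀ i, ↑(B i) ⊆ A := fun i => (Set.subset_diff.mp (hBsub i)).1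
  have hBge : ∀ i n, n ∈ B i → pos i ≤ n := by
    intro i n hn
    have := (hBsub i) hn
    simp only [Set.mem_diff, Set.mem_Iio, not_lt] at this
    exact le_trans (le_max_left _ _) this.2
  have hBlt : ∀ i n, n ∈ B i → n < pos (i + 1) := by
    intro i n hn
    have h1 : n ≤ (Hm (pos i)).sup id := Finset.le_sup (f := id) hn
    rw [hpos_succ]
    omega
  have hposmono : ∀ i, pos i < pos (i + 1) := by
    intro i; rw [hpos_succ]; omega
  have hpos_le : ∀ i j, i ≤ j → pos i ≤ pos j := by
    intro i j hij
    induction j with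
    | zero =>
      have : i = 0 := by omega
      subst this; exact le_rfl
    | succ j ih =>
      rcases Nat.lt_or_ge i (j+1) with hlt | hge
      · exact le_trans (ih (by omega)) (hposmono j).le
      · have : i = j + 1 := by omega
        subst this; exact le_rfl
  have hpos_ge : ∀ i, i ≤ pos i := by
    intro i
    induction i with
    | zero => exact Nat.zero_le _
    | succ i ih => have := hposmono i; omega
  have hBdisj : ∀ i j, i < j → Disjoint (B i) (B j) := by
    intro i j hij
    rw [Finset.disjoint_left]
    intro n hni hnj
    have h1 := hBlt i n hni
    have h2 := hBge j n hnj
    have h3 := hpos_le (i+1) j hij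
    omega
  -- per-column summability of blocks
  have hsumblocks : ∀ k, ∑' i, (∑ n ∈ B i, ENNReal.ofReal |h n k|) ≤ s13mu h k A := by
    intro k
    rw [ENNReal.tsum_eq_iSup_sum]
    refine iSup_le fun s => ?_
    rw [← Finset.sum_biUnion (fun x _ y _ hxy => by
      rcases Nat.lt_or_ge x y with hlt | hge
      · exact hBdisj x y hlt
      · exact (hBdisj y x (by omega)).symm)]
    refine s13sum_le_mu ?_
    intro n hn
    simp only [Finset.coe_biUnion, Set.mem_iUnion, Finset.mem_coe] at hn
    obtain ⟨i, _, hni⟩ := hn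
    exact hBsubA i hni
  have hto0 : ∀ k, Tendsto (fun i => ∑ n ∈ B i, ENNReal.ofReal |h n k|) atTop (𝓝 0) :=
    fun k => ENNReal.tendsto_atTop_zero_of_tsum_ne_top
      (ne_top_of_le_ne_top (hfin k) (hsumblocks k))
  -- dangerous-column finiteness
  have hDfin : ∀ P : Finset ℕ, {k : ℕ | δ2 < ∑ n ∈ P, ENNReal.ofReal |h n k|}.Finite := by
    intro P
    have htsum : Tendsto (fun k => ∑ n ∈ P, ENNReal.ofReal |h n k|) atTop (𝓝 0) := by
      have hreal : Tendsto (fun k => ∑ n ∈ P, |h n k|) atTop (𝓝 0) := by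
        have : ∀ n ∈ P, Tendsto (fun k => |h n k|) atTop (𝓝 0) := by
          intro n _
          have := zero_at_infty (h n)
          rw [Filter.cocompact_eq_cofinite, Nat.cofinite_eq_atTop] at this
          simpa using this.abs
        simpa using tendsto_finset_sum P this
      have := ENNReal.tendsto_ofReal hreal
      rw [ENNReal.ofReal_zero] at this
      refine this.congr fun k => ?_
      exact ENNReal.ofReal_sum_of_nonneg (fun n _ => abs_nonneg (h n k))
    have hev : ∀ᶠ k in atTop, ∑ n ∈ P, ENNReal.ofReal |h n k| < δ2 :=
      htsum.eventually (gt_mem_nhds hδ2pos)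
    obtain ⟨K, hK⟩ := eventually_atTop.mp hev
    refine Set.Finite.subset (Set.finite_Iio K) fun k hk => ?_
    simp only [Set.mem_setOf_eq] at hk
    by_contra hge
    simp only [Set.mem_Iio, not_lt] at hge
    exact absurd (hK k hge) (not_lt.mpr hk.le)
  -- selection step
  have hstep : ∀ (r : ℕ) (i : ℕ) (P : Finset ℕ), ∃ j : ℕ, i < j ∧
      ∀ k : ℕ, δ2 < ∑ n ∈ P, ENNReal.ofReal |h n k| →
        ∑ n ∈ B j, ENNReal.ofReal |h n k| ≤ (2 : ℝ≥0∞)⁻¹ ^ r * δ8 := by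
    intro r i P
    have hc : (0:ℝ≥0∞) < (2 : ℝ≥0∞)⁻¹ ^ r * δ8 :=
      ENNReal.mul_pos (ENNReal.pow_pos (ENNReal.inv_pos.mpr (by norm_num)) r).ne' hδ8pos.ne'
    have hev : ∀ᶠ j in atTop, ∀ k ∈ (hDfin P).toFinset,
        ∑ n ∈ B j, ENNReal.ofReal |h n k| ≤ (2 : ℝ≥0∞)⁻¹ ^ r * δ8 := by
      rw [Finset.eventually_all]
      intro k _
      exact (hto0 k).eventually (ge_mem_nhds hc)
    obtain ⟨j, hj1, hj2⟩ := (hev.and (eventually_gt_atTop i)).exists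
    exact ⟨j, hj2, fun k hk => hj1 k ((hDfin P).mem_toFinset.mpr hk)⟩
  choose nxt hnxt1 hnxt2 using hstep
  set T : ℕ → ℕ × Finset ℕ := fun r => Nat.rec ((0 : ℕ), B 0)
    (fun r st => (nxt (r + 1) st.1 st.2, st.2 ∪ B (nxt (r + 1) st.1 st.2))) r with hT
  set sel : ℕ → ℕ := fun r => (T r).1 with hsel
  set Pr : ℕ → Finset ℕ := fun r => (T r).2 with hPrdef
  have hsel0 : sel 0 = 0 := rfl
  have hPr0 : Pr 0 = B 0 := rfl
  have hselmono : ∀ r, sel r < sel (r + 1) := fun r => hnxt1 (r + 1) (sel r) (Pr r)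
  have hPrsucc : ∀ r, Pr (r + 1) = Pr r ∪ B (sel (r + 1)) := fun r => rfl
  have hspec : ∀ r k, δ2 < ∑ n ∈ Pr r, ENNReal.ofReal |h n k| →
      ∑ n ∈ B (sel (r + 1)), ENNReal.ofReal |h n k| ≤ (2 : ℝ≥0∞)⁻¹ ^ (r + 1) * δ8 :=
    fun r k hk => hnxt2 (r + 1) (sel r) (Pr r) k hk
  have hselSM : StrictMono sel := strictMono_nat_of_lt_succ hselmono
  have hPrsubset : ∀ s r, s ≤ r → B (sel s) ⊆ Pr r := by
    intro s r hsr
    induction r with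
    | zero =>
      have : s = 0 := by omega
      subst this
      rw [hsel0, hPr0]
    | succ r ih =>
      rcases Nat.lt_or_ge s (r + 1) with hlt | hge
      · rw [hPrsucc]
        exact (ih (by omega)).trans Finset.subset_union_left
      · have : s = r + 1 := by omega
        subst this
        rw [hPrsucc]
        exact Finset.subset_union_right
  have hPrmono : ∀ r r', r ≤ r' → Pr r ⊆ Pr r' := by
    intro r r' hrr'
    induction r' with
    | zero =>
      have : r = 0 := by omega
      subst this; exact subset_rfl
    | succ r' ih =>
      rcases Nat.lt_or_ge r (r' + 1) with hlt | hge
      · rw [hPrsucc]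
        exact (ih (by omega)).trans Finset.subset_union_left
      · have : r = r' + 1 := by omega
        subst this; exact subset_rfl
  set C : Set ℕ := ⋃ r, (B (sel r) : Set ℕ) with hC
  have hcol : ∀ k, s13mu h k C ≤ δ := by
    intro k
    have hδarith : δ2 + δ4 + δ4 = δ := by
      rw [add_assoc]
      have h44 : δ4 + δ4 = δ2 := by rw [hδ4]; exact ENNReal.add_halves δ2
      rw [h44]
      rw [hδ2]; exact ENNReal.add_halves δ
    by_cases hdang : ∃ r, δ2 < ∑ n ∈ Pr r, ENNReal.ofReal |h n k|
    · set r₀ := Nat.find hdang with hr₀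
      have hr₀spec := Nat.find_spec hdang
      have hCsub : C ⊆ (↑(Pr r₀) : Set ℕ) ∪ ⋃ j, (B (sel (r₀ + 1 + j)) : Set ℕ) := by
        rw [hC]
        refine Set.iUnion_subset fun r => ?_
        rcases Nat.lt_or_ge r₀ r with hgt | hle
        · intro n hn
          refine Set.mem_union_right _ (Set.mem_iUnion.mpr ⟨r - r₀ - 1, ?_⟩)
          have hre : r₀ + 1 + (r - r₀ - 1) = r := by omega
          rw [hre]; exact hn
        · intro n hn
          exact Set.mem_union_left _ (hPrsubset r r₀ hle hn)
      have h1 : s13mu h k ↑(Pr r₀) ≤ δ2 + (ε + δ16) := by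
        rcases Nat.eq_zero_or_pos r₀ with hz | hpos'
        · rw [hz, hPr0, s13mu_finset]
          calc ∑ n ∈ B 0, ENNReal.ofReal |h n k| ≤ ε + δ16 := hm3 (pos 0) k
            _ ≤ δ2 + (ε + δ16) := le_add_self
        · obtain ⟨r', hr'⟩ : ∃ r', r₀ = r' + 1 := ⟨r₀ - 1, by omega⟩
          have hnd : ¬ δ2 < ∑ n ∈ Pr r', ENNReal.ofReal |h n k| :=
            Nat.find_min hdang (by omega)
          push_neg at hnd
          rw [hr', hPrsucc r']
          calc s13mu h k ↑(Pr r' ∪ B (sel (r' + 1)))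
              ≤ s13mu h k (↑(Pr r') ∪ ↑(B (sel (r' + 1)))) := by
                rw [Finset.coe_union]
            _ ≤ s13mu h k ↑(Pr r') + s13mu h k ↑(B (sel (r' + 1))) := s13mu_union_le h k _ _
            _ ≤ δ2 + (ε + δ16) := by
                rw [s13mu_finset, s13mu_finset]
                exact add_le_add hnd (hm3 (pos (sel (r' + 1))) k)
      have h2 : s13mu h k (⋃ j, (B (sel (r₀ + 1 + j)) : Set ℕ)) ≤ δ4 := by
        refine le_trans (s13mu_iUnion_le h k _) ?_
        have hterm : ∀ j, s13mu h k ↑(B (sel (r₀ + 1 + j))) ≤ (2 : ℝ≥0∞)⁻¹ ^ j * δ8 := by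
          intro j
          have hdangj : δ2 < ∑ n ∈ Pr (r₀ + j), ENNReal.ofReal |h n k| :=
            lt_of_lt_of_le hr₀spec (Finset.sum_le_sum_of_subset (hPrmono r₀ (r₀ + j) (by omega)))
          have := hspec (r₀ + j) k hdangj
          have hre : r₀ + j + 1 = r₀ + 1 + j := by omega
          rw [hre] at this
          rw [s13mu_finset]
          refine le_trans this (mul_le_mul_left ?_ _)
          exact pow_le_pow_of_le_one zero_le (ENNReal.inv_le_one.mpr (by norm_num))
            (by omega)
        refine le_trans (ENNReal.tsum_le_tsum hterm) ?_
        rw [ENNReal.tsum_mul_right, ENNReal.tsum_geometric, ENNReal.one_sub_inv_two, inv_inv]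
        rw [hδ8]
        rw [ENNReal.mul_div_cancel' (by norm_num) (by norm_num)]
      calc s13mu h k C ≤ s13mu h k ((↑(Pr r₀) : Set ℕ) ∪ ⋃ j, (B (sel (r₀ + 1 + j)) : Set ℕ)) :=
            s13mu_mono hCsub
        _ ≤ s13mu h k ↑(Pr r₀) + s13mu h k (⋃ j, (B (sel (r₀ + 1 + j)) : Set ℕ)) :=
            s13mu_union_le h k _ _
        _ ≤ (δ2 + (ε + δ16)) + δ4 := add_le_add h1 h2
        _ ≤ (δ2 + δ4) + δ4 := by
            refine add_le_add_left (add_le_add_right ?_ δ2) δ4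
            calc ε + δ16 ≤ δ8 + δ8 := add_le_add (min_le_right _ _)
                  (by rw [hδ16]; exact ENNReal.half_le_self)
              _ = δ4 := by rw [hδ8]; exact ENNReal.add_halves δ4
        _ = δ := hδarith
    · push_neg at hdang
      have hle2 : s13mu h k C ≤ δ2 := by
        refine s13mu_le_of_forall_sum_le fun F hF => ?_
        have hexAll : ∀ n : ℕ, ∃ r : ℕ, n ∈ F → n ∈ B (sel r) := by
          intro n
          by_cases hn : n ∈ F
          · have := hF hn
            rw [hC] at this
            obtain ⟨r, hr⟩ := Set.mem_iUnion.mp this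
            exact ⟨r, fun _ => hr⟩
          · exact ⟨0, fun hcon => absurd hcon hn⟩
        choose ridx hridx using hexAll
        have hFsub : F ⊆ Pr (F.sup ridx) := by
          intro n hn
          exact hPrsubset (ridx n) (F.sup ridx) (Finset.le_sup hn) (hridx n hn)
        calc ∑ n ∈ F, ENNReal.ofReal |h n k|
            ≤ ∑ n ∈ Pr (F.sup ridx), ENNReal.ofReal |h n k| :=
              Finset.sum_le_sum_of_subset hFsub
          _ ≤ δ2 := hdang _
      refine le_trans hle2 ?_
      rw [hδ2]; exact ENNReal.half_le_self
  have hνC : s13nu h C ≤ δ := iSup_le hcol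
  have hCZ := hU C hνC
  obtain ⟨N₀, hN₀⟩ := ENNReal.tendsto_atTop_zero.mp hCZ ε hε0
  have hblocksub : (B (sel N₀) : Set ℕ) ⊆ C \ Set.Iio N₀ := by
    intro n hn
    constructor
    · rw [hC]; exact Set.mem_iUnion.mpr ⟨N₀, hn⟩
    · simp only [Set.mem_Iio, not_lt]
      calc N₀ ≤ sel N₀ := hselSM.le_apply
        _ ≤ pos (sel N₀) := hpos_ge _
        _ ≤ n := hBge _ n hn
  have hgtε : ε < s13nu h (C \ Set.Iio N₀) := by
    refine lt_of_lt_of_le (hm2 (pos (sel N₀))) ?_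
    exact le_trans (s13sum_le_mu hblocksub)
      (le_iSup (fun k => s13mu h k (C \ Set.Iio N₀)) (km (pos (sel N₀))))
  exact absurd (hN₀ N₀ le_rfl) (not_le.mpr hgtε)


end Stmt13Aux

/-- a tall `F_σ` P-ideal (i.e. `J = Exh(φ) = Fin(φ)` for an lsc submeasure
`φ`) which is representable in `c₀` is a summable ideal. -/
theorem stmt13 (φ : Set ℕ → ENNReal)
    (h0 : φ ∅ = 0)
    (hmono : ∀ A B : Set ℕ, A ⊆ B → φ A ≤ φ B)
    (hsub : ∀ A B : Set ℕ, φ (A ∪ B) ≤ φ A + φ B)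
    (hsing : ∀ n : ℕ, φ {n} < ⊤)
    (hlsc : ∀ A : Set ℕ, φ A = ⨆ (F : Finset ℕ) (_ : ↑F ⊆ A), φ ↑F)
    (hExhFin : ∀ A : Set ℕ,
      Tendsto (fun N : ℕ => φ (A \ Set.Iio N)) atTop (𝓝 0) ↔ φ A < ⊤)
    (htall : ∀ B : Set ℕ, B.Infinite →
      ∃ C : Set ℕ, C ⊆ B ∧ C.Infinite ∧
        Tendsto (fun N : ℕ => φ (C \ Set.Iio N)) atTop (𝓝 0))
    (hrep : ∃ h : ℕ → C₀(ℕ, ℝ), ∀ A : Set ℕ,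
      Tendsto (fun N : ℕ => φ (A \ Set.Iio N)) atTop (𝓝 0) ↔
        Summable (fun n : A => h n)) :
    ∃ g : ℕ → ℝ, (∀ n : ℕ, 0 ≤ g n) ∧
      ∀ A : Set ℕ,
        Tendsto (fun N : ℕ => φ (A \ Set.Iio N)) atTop (𝓝 0) ↔
          (∑' n : A, ENNReal.ofReal (g ↑n)) < ⊤ := by
  classical
  obtain ⟨h, hrep⟩ := hrep
  have habs : ∀ n k, |h n k| ≤ ‖h n‖ := by
    intro n k
    rw [← ZeroAtInftyContinuousMap.norm_toBCF_eq_norm]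
    exact (h n).toBCF.norm_coe_le_norm k
  set G : ℕ → ℝ≥0∞ := fun n => ∑' k, (2 : ℝ≥0∞)⁻¹ ^ k * ENNReal.ofReal |h n k| with hG
  have hgeom : (∑' k : ℕ, (2 : ℝ≥0∞)⁻¹ ^ k) = 2 := by
    rw [ENNReal.tsum_geometric, ENNReal.one_sub_inv_two, inv_inv]
  have hGle : ∀ n, G n ≤ 2 * ENNReal.ofReal ‖h n‖ := by
    intro n
    calc G n ≤ ∑' k : ℕ, (2 : ℝ≥0∞)⁻¹ ^ k * ENNReal.ofReal ‖h n‖ :=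
          ENNReal.tsum_le_tsum fun k =>
            mul_le_mul_right (ENNReal.ofReal_le_ofReal (habs n k)) _
      _ = (∑' k : ℕ, (2 : ℝ≥0∞)⁻¹ ^ k) * ENNReal.ofReal ‖h n‖ := ENNReal.tsum_mul_right
      _ = 2 * ENNReal.ofReal ‖h n‖ := by rw [hgeom]
  have hGtop : ∀ n, G n ≠ ⊤ := fun n =>
    ne_top_of_le_ne_top (ENNReal.mul_ne_top (by norm_num) ENNReal.ofReal_ne_top) (hGle n)
  refine ⟨fun n => (G n).toReal, fun n => ENNReal.toReal_nonneg, fun A => ?_⟩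
  have hsumid : (∑' n : A, ENNReal.ofReal ((G ↑n).toReal))
      = ∑' k, (2 : ℝ≥0∞)⁻¹ ^ k * s13mu h k A := by
    calc (∑' n : A, ENNReal.ofReal ((G ↑n).toReal))
        = ∑' n : A, G ↑n := tsum_congr fun n => ENNReal.ofReal_toReal (hGtop ↑n)
      _ = ∑' (n : A) (k : ℕ), (2 : ℝ≥0∞)⁻¹ ^ k * ENNReal.ofReal |h ↑n k| := rfl
      _ = ∑' (k : ℕ) (n : A), (2 : ℝ≥0∞)⁻¹ ^ k * ENNReal.ofReal |h ↑n k| := ENNReal.tsum_comm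
      _ = ∑' k, (2 : ℝ≥0∞)⁻¹ ^ k * s13mu h k A := by
          refine tsum_congr fun k => ?_
          rw [ENNReal.tsum_mul_left]
          congr 1
          rw [s13mu]
          exact tsum_subtype A (fun n => ENNReal.ofReal |h n k|)
  rw [hrep A, s13char h A]
  have hgoalrw : (∑' n : A, ENNReal.ofReal ((fun n => (G n).toReal) ↑n))
      = ∑' k, (2 : ℝ≥0∞)⁻¹ ^ k * s13mu h k A := hsumid
  rw [hgoalrw]
  constructor
  · intro hT
    obtain ⟨N, hN⟩ := ENNReal.tendsto_atTop_zero.mp hT 1 one_pos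
    set Hd : ℝ≥0∞ := ∑ n ∈ Finset.range N, ENNReal.ofReal ‖h n‖ with hHd
    have hHdtop : Hd < ⊤ := ENNReal.sum_lt_top.mpr fun n _ => ENNReal.ofReal_lt_top
    have hmuA : ∀ k, s13mu h k A ≤ Hd + 1 := by
      intro k
      have hsplit : A ⊆ (A ∩ Set.Iio N) ∪ (A \ Set.Iio N) := by
        intro n hn
        by_cases hlt : n < N
        · exact Set.mem_union_left _ ⟨hn, hlt⟩
        · exact Set.mem_union_right _ ⟨hn, hlt⟩
      have hhead : s13mu h k (A ∩ Set.Iio N) ≤ Hd := by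
        refine s13mu_le_of_forall_sum_le fun F hF => ?_
        have hFr : F ⊆ Finset.range N := by
          intro n hn
          exact Finset.mem_range.mpr (hF hn).2
        calc ∑ n ∈ F, ENNReal.ofReal |h n k|
            ≤ ∑ n ∈ F, ENNReal.ofReal ‖h n‖ :=
              Finset.sum_le_sum fun n _ => ENNReal.ofReal_le_ofReal (habs n k)
          _ ≤ Hd := Finset.sum_le_sum_of_subset hFr
      have htail : s13mu h k (A \ Set.Iio N) ≤ 1 :=
        le_trans (le_iSup (fun k => s13mu h k (A \ Set.Iio N)) k) (hN N le_rfl)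
      calc s13mu h k A ≤ s13mu h k ((A ∩ Set.Iio N) ∪ (A \ Set.Iio N)) := s13mu_mono hsplit
        _ ≤ s13mu h k (A ∩ Set.Iio N) + s13mu h k (A \ Set.Iio N) := s13mu_union_le h k _ _
        _ ≤ Hd + 1 := add_le_add hhead htail
    calc ∑' k, (2 : ℝ≥0∞)⁻¹ ^ k * s13mu h k A
        ≤ ∑' k, (2 : ℝ≥0∞)⁻¹ ^ k * (Hd + 1) :=
          ENNReal.tsum_le_tsum fun k => mul_le_mul_right (hmuA k) _
      _ = 2 * (Hd + 1) := by rw [ENNReal.tsum_mul_right, hgeom]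
      _ < ⊤ := ENNReal.mul_lt_top (by norm_num)
          (ENNReal.add_lt_top.mpr ⟨hHdtop, ENNReal.one_lt_top⟩)
  · intro hlt
    have hfin : ∀ k, s13mu h k A ≠ ⊤ := by
      intro k htop
      have hterm : (2 : ℝ≥0∞)⁻¹ ^ k * s13mu h k A ≤ ∑' k, (2 : ℝ≥0∞)⁻¹ ^ k * s13mu h k A :=
        ENNReal.le_tsum k
      rw [htop, ENNReal.mul_top (by
        exact pow_ne_zero k (ENNReal.inv_ne_zero.mpr (by norm_num)))] at hterm
      exact absurd (lt_of_le_of_lt hterm hlt) (lt_irrefl ⊤)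
    exact s13main φ h hmono hlsc hExhFin htall hrep A hfin
end

section
/- Farah's ideal J_F is not representable in c₀: there is no function h : ℕ → c₀ such that for every A ⊆ ℕ, A ∈ J_F if and only if ∑_{n∈A} h(n) converges unconditionally in c₀. -/
open Filter Topology
open scoped ZeroAtInfty

namespace Stmt14

/-- the `n`-th dyadic block `[2ⁿ, 2ⁿ⁺¹)` as a finset -/
def blk (n : ℕ) : Finset ℕ := Finset.Ico (2 ^ n) (2 ^ (n + 1))

lemma mem_blk {i n : ℕ} : i ∈ blk n ↔ 2 ^ n ≤ i ∧ i < 2 ^ (n + 1) := Finset.mem_Ico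

lemma blk_disjoint {n m : ℕ} (h : n ≠ m) : Disjoint (blk n) (blk m) := by
  wlog hnm : n < m generalizing n m
  · exact (this h.symm (by omega)).symm
  · rw [Finset.disjoint_left]
    intro i hi hi'
    rw [mem_blk] at hi hi'
    have : 2 ^ (n + 1) ≤ 2 ^ m := Nat.pow_le_pow_right (by norm_num) (by omega)
    omega

lemma card_blk (n : ℕ) : (blk n).card = 2 ^ n := by
  rw [blk, Nat.card_Ico, pow_succ]
  omega

/-- number of elements of `G` in the `n`-th block -/
def cnt (G : Finset ℕ) (n : ℕ) : ℕ := (G ∩ blk n).card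

lemma cnt_eq_zero_of_lt {G : Finset ℕ} {n : ℕ} (h : ∀ i ∈ G, i < 2 ^ n) :
    cnt G n = 0 := by
  rw [cnt, Finset.card_eq_zero, Finset.eq_empty_iff_forall_notMem]
  intro i hi
  rw [Finset.mem_inter, mem_blk] at hi
  exact absurd (h i hi.1) (by omega)

lemma cnt_eq_zero_of_ge {G : Finset ℕ} {n : ℕ} (h : ∀ i ∈ G, 2 ^ (n + 1) ≤ i) :
    cnt G n = 0 := by
  rw [cnt, Finset.card_eq_zero, Finset.eq_empty_iff_forall_notMem]
  intro i hi
  rw [Finset.mem_inter, mem_blk] at hi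
  exact absurd (h i hi.1) (by omega)

/-- partial sums of the submeasure of Farah's ideal -/
noncomputable def Sf (G : Finset ℕ) (N : ℕ) : ℝ :=
  ∑ n ∈ Finset.range N, ((min n (cnt G n) : ℕ) : ℝ) / (n : ℝ) ^ 2

lemma Sf_nonneg (G : Finset ℕ) (N : ℕ) : 0 ≤ Sf G N :=
  Finset.sum_nonneg fun n _ => by positivity

lemma Sf_mono (G : Finset ℕ) {N M : ℕ} (h : N ≤ M) : Sf G N ≤ Sf G M :=
  Finset.sum_le_sum_of_subset_of_nonneg (Finset.range_subset_range.2 h)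
    (fun n _ _ => by positivity)

lemma Sf_empty (N : ℕ) : Sf ∅ N = 0 := by
  unfold Sf cnt
  simp

/-- if all elements of `G` are below `2 ^ B`, the partial sums stabilize at `B` -/
lemma Sf_le_stable {G : Finset ℕ} {B : ℕ} (hB : ∀ i ∈ G, i < 2 ^ B) (N : ℕ) :
    Sf G N ≤ Sf G B := by
  rcases le_total N B with hl | hl
  · exact Sf_mono G hl
  · rw [Sf, Sf, ← Finset.sum_range_add_sum_Ico _ hl]
    have : ∑ n ∈ Finset.Ico B N, ((min n (cnt G n) : ℕ) : ℝ) / (n : ℝ) ^ 2 = 0 := by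
      refine Finset.sum_eq_zero fun n hn => ?_
      rw [Finset.mem_Ico] at hn
      have : cnt G n = 0 := cnt_eq_zero_of_lt fun i hi =>
        lt_of_lt_of_le (hB i hi) (Nat.pow_le_pow_right (by norm_num) hn.1)
      rw [this]
      simp
    rw [this, add_zero]

section withh

variable (h : ℕ → C₀(ℕ, ℝ))

/-- total variation of `h · k` on a finite set -/
noncomputable def nu (k : ℕ) (G : Finset ℕ) : ℝ := ∑ i ∈ G, |h i k|

lemma nu_nonneg (k : ℕ) (G : Finset ℕ) : 0 ≤ nu h k G :=
  Finset.sum_nonneg fun i _ => abs_nonneg _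

lemma nu_mono (k : ℕ) {G G' : Finset ℕ} (hs : G ⊆ G') : nu h k G ≤ nu h k G' :=
  Finset.sum_le_sum_of_subset_of_nonneg hs fun i _ _ => abs_nonneg _

lemma nu_union (k : ℕ) {G G' : Finset ℕ} (hd : Disjoint G G') :
    nu h k (G ∪ G') = nu h k G + nu h k G' := Finset.sum_union hd

lemma nu_biUnion_le (k : ℕ) {s : Finset ℕ} {g : ℕ → Finset ℕ} :
    nu h k (s.biUnion g) ≤ ∑ j ∈ s, nu h k (g j) := by
  classical
  induction s using Finset.induction with
  | empty => simp [nu]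
  | @insert a s hx ih =>
      rw [Finset.biUnion_insert, Finset.sum_insert hx]
      calc nu h k (g a ∪ s.biUnion g) ≤ nu h k (g a) + nu h k (s.biUnion g) := by
            unfold nu
            rw [← Finset.sum_union_inter]
            have := Finset.sum_nonneg (s := g a ∩ s.biUnion g)
              (f := fun i => |h i k|) (fun i _ => abs_nonneg _)
            linarith
        _ ≤ _ := by linarith

lemma tendsto_nu (G : Finset ℕ) : Tendsto (fun k => nu h k G) atTop (𝓝 0) := by
  have : Tendsto (fun k => ∑ i ∈ G, |h i k|) atTop (𝓝 (∑ i ∈ G, (0 : ℝ))) := by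
    refine tendsto_finset_sum _ fun i _ => ?_
    have hz : Tendsto (h i) (cocompact ℕ) (𝓝 0) := zero_at_infty (h i)
    rw [cocompact_eq_cofinite, Nat.cofinite_eq_atTop] at hz
    simpa using hz.abs
  simpa [nu] using this

lemma sum_apply' (G : Finset ℕ) (k : ℕ) : (∑ i ∈ G, h i) k = ∑ i ∈ G, h i k := by
  classical
  induction G using Finset.induction with
  | empty => simp
  | @insert a s hx ih =>
      rw [Finset.sum_insert hx, Finset.sum_insert hx, ← ih]
      rfl

lemma abs_apply_le_norm (f : C₀(ℕ, ℝ)) (k : ℕ) : |f k| ≤ ‖f‖ := by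
  rw [← ZeroAtInftyContinuousMap.norm_toBCF_eq_norm]
  exact f.toBCF.norm_coe_le_norm k

lemma norm_le_of_forall {f : C₀(ℕ, ℝ)} {ε : ℝ} (hε : 0 ≤ ε) (hf : ∀ k, |f k| ≤ ε) :
    ‖f‖ ≤ ε := by
  rw [← ZeroAtInftyContinuousMap.norm_toBCF_eq_norm]
  exact (BoundedContinuousFunction.norm_le hε).2 hf


/-- If the restriction of `h` to `A` is (unconditionally) summable, then the total variations
over far finite subsets of `A` are uniformly small. -/
lemma tail_of_summable {A : Set ℕ} (hs : Summable fun n : A => h n) :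
    ∀ ε : ℝ, 0 < ε → ∃ m : ℕ, ∀ G : Finset ℕ, ↑G ⊆ A → (∀ i ∈ G, m ≤ i) →
      ∀ k, nu h k G ≤ ε := by
  classical
  intro ε hε
  obtain ⟨s, hsv⟩ := hs.vanishing (Metric.ball_mem_nhds 0 (by positivity : (0:ℝ) < ε / 4))
  refine ⟨(s.image Subtype.val).sup id + 1, ?_⟩
  intro G hGA hGm k
  -- key: any subset of G has small sums
  have key : ∀ t : Finset ℕ, t ⊆ G → |∑ i ∈ t, h i k| < ε / 4 := by
    intro t ht
    have htA : ∀ i ∈ t, i ∈ A := fun i hi => hGA (ht hi)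
    set t' : Finset A := t.attach.map
      ⟨fun i => (⟨i.1, htA i.1 i.2⟩ : A), by
        intro x y hxy
        rw [Subtype.mk.injEq] at hxy
        exact Subtype.ext hxy⟩ with ht'
    have hdisj : Disjoint t' s := by
      rw [Finset.disjoint_left]
      rintro a ha has
      rw [ht', Finset.mem_map] at ha
      obtain ⟨x, -, rfl⟩ := ha
      have h1 : (x : ℕ) ∈ s.image Subtype.val := Finset.mem_image.2 ⟨_, has, rfl⟩
      have h2 : (x : ℕ) ≤ (s.image Subtype.val).sup id := Finset.le_sup (f := id) h1
      have h3 := hGm _ (ht x.2)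
      omega
    have hsum : ∑ a ∈ t', h ↑a = ∑ i ∈ t, h i := by
      rw [ht', Finset.sum_map]
      exact Finset.sum_attach t (fun i => h i)
    have := hsv t' hdisj
    rw [mem_ball_zero_iff, hsum] at this
    calc |∑ i ∈ t, h i k| = |(∑ i ∈ t, h i) k| := by rw [sum_apply']
      _ ≤ ‖∑ i ∈ t, h i‖ := abs_apply_le_norm _ k
      _ < ε / 4 := this
  have hsplit := Finset.sum_filter_add_sum_filter_not G (fun i => 0 ≤ h i k)
    (fun i => |h i k|)
  have h1 : ∑ i ∈ G.filter (fun i => 0 ≤ h i k), |h i k| < ε / 4 := by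
    have := key (G.filter (fun i => 0 ≤ h i k)) (Finset.filter_subset _ _)
    calc ∑ i ∈ G.filter (fun i => 0 ≤ h i k), |h i k|
        = ∑ i ∈ G.filter (fun i => 0 ≤ h i k), h i k :=
          Finset.sum_congr rfl fun i hi => abs_of_nonneg (Finset.mem_filter.1 hi).2
      _ ≤ |∑ i ∈ G.filter (fun i => 0 ≤ h i k), h i k| := le_abs_self _
      _ < ε / 4 := this
  have h2 : ∑ i ∈ G.filter (fun i => ¬ 0 ≤ h i k), |h i k| < ε / 4 := by
    have := key (G.filter (fun i => ¬ 0 ≤ h i k)) (Finset.filter_subset _ _)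
    calc ∑ i ∈ G.filter (fun i => ¬ 0 ≤ h i k), |h i k|
        = -∑ i ∈ G.filter (fun i => ¬ 0 ≤ h i k), h i k := by
          rw [← Finset.sum_neg_distrib]
          exact Finset.sum_congr rfl fun i hi =>
            abs_of_neg (lt_of_not_ge (Finset.mem_filter.1 hi).2)
      _ ≤ |∑ i ∈ G.filter (fun i => ¬ 0 ≤ h i k), h i k| := neg_le_abs _
      _ < ε / 4 := this
  rw [nu, ← hsplit]
  linarith

/-- Conversely, if total variations over far finite subsets of `A` are uniformly small,
then the restriction of `h` to `A` is summable. -/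
lemma summable_of_tail {A : Set ℕ}
    (H : ∀ ε : ℝ, 0 < ε → ∃ m : ℕ, ∀ G : Finset ℕ, ↑G ⊆ A → (∀ i ∈ G, m ≤ i) →
      ∀ k, nu h k G ≤ ε) :
    Summable fun n : A => h n := by
  classical
  rw [summable_iff_vanishing]
  intro e he
  obtain ⟨ε, hε, hball⟩ := Metric.mem_nhds_iff.1 he
  obtain ⟨m, hm⟩ := H (ε / 2) (by positivity)
  refine ⟨(Finset.range m).subtype (· ∈ A), fun t ht => ?_⟩
  apply hball
  rw [mem_ball_zero_iff]
  set G : Finset ℕ := t.map (Function.Embedding.subtype _) with hG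
  have hGA : ↑G ⊆ A := by
    intro i hi
    rw [hG] at hi
    simp only [Finset.coe_map, Set.mem_image] at hi
    obtain ⟨a, -, rfl⟩ := hi
    exact a.2
  have hGm : ∀ i ∈ G, m ≤ i := by
    intro i hi
    rw [hG, Finset.mem_map] at hi
    obtain ⟨a, ha, rfl⟩ := hi
    simp only [Function.Embedding.coe_subtype]
    by_contra hlt
    have : a ∈ (Finset.range m).subtype (· ∈ A) := by
      simp only [Finset.mem_subtype, Finset.mem_range]
      omega
    exact (Finset.disjoint_left.1 ht) ha this
  have hnu := hm G hGA hGm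
  have hsum : ∑ a ∈ t, h ↑a = ∑ i ∈ G, h i := by
    rw [hG, Finset.sum_map]
    rfl
  rw [hsum]
  have : ‖∑ i ∈ G, h i‖ ≤ ε / 2 := by
    refine norm_le_of_forall (by positivity) fun k => ?_
    rw [sum_apply']
    calc |∑ i ∈ G, h i k| ≤ ∑ i ∈ G, |h i k| := Finset.abs_sum_le_sum_abs _ _
      _ ≤ ε / 2 := hnu k
  linarith

end withh

end Stmt14


namespace Stmt14

lemma pow_lt_pow_nat {a c : ℕ} (h : 2 ^ a < 2 ^ c) : a < c := by
  by_contra hc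
  push_neg at hc
  have := Nat.pow_le_pow_right (show 0 < 2 by norm_num) hc
  omega

/-- recursive construction of finite sets occupying successive disjoint dyadic block ranges -/
lemma constr (P : ℕ → Finset ℕ → Prop)
    (H : ∀ j m : ℕ, ∃ G : Finset ℕ, (∀ i ∈ G, m ≤ i) ∧ P j G) :
    ∃ (g : ℕ → Finset ℕ) (b : ℕ → ℕ), b 0 = 0 ∧ StrictMono b ∧ (∀ j, j ≤ b j) ∧
      (∀ j, ∀ i ∈ g j, 2 ^ b j ≤ i ∧ i < 2 ^ b (j + 1)) ∧ (∀ j, P j (g j)) := by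
  classical
  choose F hF1 hF2 using H
  let b : ℕ → ℕ := fun j => Nat.rec 0 (fun j bj => bj + (F j (2 ^ bj)).sup id + 1) j
  have hb0 : b 0 = 0 := rfl
  have hbs : ∀ j, b (j + 1) = b j + (F j (2 ^ b j)).sup id + 1 := fun j => rfl
  have hmono : StrictMono b := strictMono_nat_of_lt_succ fun j => by rw [hbs]; omega
  refine ⟨fun j => F j (2 ^ b j), b, hb0, hmono, ?_, ?_, fun j => hF2 _ _⟩
  · intro j
    induction j with
    | zero => omega
    | succ j ih => rw [hbs]; omega
  · intro j i hi
    refine ⟨hF1 _ _ i hi, ?_⟩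
    have h1 : i ≤ (F j (2 ^ b j)).sup id := Finset.le_sup (f := id) hi
    have h2 : (F j (2 ^ b j)).sup id < 2 ^ (F j (2 ^ b j)).sup id := Nat.lt_two_pow_self
    have h3 : 2 ^ (F j (2 ^ b j)).sup id ≤ 2 ^ b (j + 1) :=
      Nat.pow_le_pow_right (by norm_num) (by rw [hbs]; omega)
    omega

lemma exists_interval {b : ℕ → ℕ} (hb0 : b 0 = 0) (hle : ∀ j, j ≤ b j)
    (n : ℕ) : ∃ j, b j ≤ n ∧ n < b (j + 1) := by
  classical
  set Q : ℕ → Prop := fun j => b j ≤ n with hQ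
  have h0 : Q 0 := by rw [hQ]; omega
  set j₀ := Nat.findGreatest Q (n + 1) with hj₀
  have hspec : Q j₀ := Nat.findGreatest_spec (Nat.zero_le _) h0
  have hjle : j₀ ≤ n := le_trans (hle j₀) hspec
  refine ⟨j₀, hspec, ?_⟩
  by_contra hc
  push_neg at hc
  have : j₀ + 1 ≤ j₀ := by
    rw [hj₀]
    exact Nat.le_findGreatest (by omega) (show Q (j₀ + 1) from hc)
  omega

/-- the series term appearing in the statement -/
noncomputable def seriesTerm (A : Set ℕ) (n : ℕ) : ℝ :=
  ((min n ((A ∩ Set.Ico (2 ^ n) (2 ^ (n + 1))).ncard) : ℕ) : ℝ) / (n : ℝ) ^ 2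

lemma seriesTerm_nonneg (A : Set ℕ) (n : ℕ) : 0 ≤ seriesTerm A n := by
  unfold seriesTerm; positivity

lemma blocks_eq {g : ℕ → Finset ℕ} {b : ℕ → ℕ} (hmono : StrictMono b)
    (hrange : ∀ j, ∀ i ∈ g j, 2 ^ b j ≤ i ∧ i < 2 ^ b (j + 1))
    {j n : ℕ} (h1 : b j ≤ n) (h2 : n < b (j + 1)) :
    (⋃ j', (g j' : Set ℕ)) ∩ Set.Ico (2 ^ n) (2 ^ (n + 1)) = ↑(g j ∩ blk n) := by
  ext x
  simp only [Set.mem_inter_iff, Set.mem_iUnion, Finset.coe_inter, Finset.mem_coe,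
    Set.mem_Ico, blk, Finset.mem_Ico]
  constructor
  · rintro ⟨⟨j', hx'⟩, hlo, hhi⟩
    obtain ⟨ha, hb⟩ := hrange j' x hx'
    have hj'n : b j' ≤ n := by
      have : b j' < n + 1 := pow_lt_pow_nat (lt_of_le_of_lt ha hhi)
      omega
    have hnj' : n < b (j' + 1) := pow_lt_pow_nat (lt_of_le_of_lt hlo hb)
    have : j' = j := by
      by_contra hne
      rcases Nat.lt_or_ge j' j with hlt | hge
      · have : b (j' + 1) ≤ b j := hmono.le_iff_le.2 (by omega)
        omega
      · have hgt : j < j' := by omega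
        have : b (j + 1) ≤ b j' := hmono.le_iff_le.2 (by omega)
        omega
    subst this
    exact ⟨hx', hlo, hhi⟩
  · rintro ⟨hx, hlo, hhi⟩
    exact ⟨⟨j, hx⟩, hlo, hhi⟩

lemma term_eq {g : ℕ → Finset ℕ} {b : ℕ → ℕ} (hmono : StrictMono b)
    (hrange : ∀ j, ∀ i ∈ g j, 2 ^ b j ≤ i ∧ i < 2 ^ b (j + 1))
    {j n : ℕ} (h1 : b j ≤ n) (h2 : n < b (j + 1)) :
    seriesTerm (⋃ j', (g j' : Set ℕ)) n = ((min n (cnt (g j) n) : ℕ) : ℝ) / (n : ℝ) ^ 2 := by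
  unfold seriesTerm
  rw [blocks_eq hmono hrange h1 h2, Set.ncard_coe_finset]
  rfl

/-- sum of the series terms over the `j`-th block range -/
lemma sum_term_Ico {g : ℕ → Finset ℕ} {b : ℕ → ℕ} (hmono : StrictMono b)
    (hrange : ∀ j, ∀ i ∈ g j, 2 ^ b j ≤ i ∧ i < 2 ^ b (j + 1)) (j : ℕ) :
    ∑ n ∈ Finset.Ico (b j) (b (j + 1)), seriesTerm (⋃ j', (g j' : Set ℕ)) n
      = Sf (g j) (b (j + 1)) := by
  have hzero : ∀ n ∈ Finset.range (b j), ((min n (cnt (g j) n) : ℕ) : ℝ) / (n : ℝ) ^ 2 = 0 := by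
    intro n hn
    rw [Finset.mem_range] at hn
    have : cnt (g j) n = 0 := cnt_eq_zero_of_ge fun i hi => by
      have h2n : 2 ^ (n + 1) ≤ 2 ^ b j := Nat.pow_le_pow_right (by norm_num) (by omega)
      exact le_trans h2n (hrange j i hi).1
    rw [this]
    simp
  have : Sf (g j) (b (j + 1)) = ∑ n ∈ Finset.Ico (b j) (b (j + 1)),
      ((min n (cnt (g j) n) : ℕ) : ℝ) / (n : ℝ) ^ 2 := by
    rw [Sf, ← Finset.sum_range_add_sum_Ico _ (le_of_lt (hmono (by omega : j < j + 1)))]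
    rw [Finset.sum_eq_zero hzero, zero_add]
  rw [this]
  exact Finset.sum_congr rfl fun n hn => by
    rw [Finset.mem_Ico] at hn
    exact term_eq hmono hrange hn.1 hn.2

end Stmt14


namespace Stmt14

lemma geom_range_le (N : ℕ) : ∑ i ∈ Finset.range N, (1/2 : ℝ) ^ i ≤ 2 := by
  have hsum : Summable (fun i : ℕ => (1/2 : ℝ) ^ i) :=
    summable_geometric_of_lt_one (by norm_num) (by norm_num)
  have h1 : ∑ i ∈ Finset.range N, (1/2 : ℝ) ^ i ≤ ∑' i, (1/2 : ℝ) ^ i :=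
    Summable.sum_le_tsum _ (fun i _ => by positivity) hsum
  have h2 : ∑' i, (1/2 : ℝ) ^ i = 2 := by
    rw [tsum_geometric_of_lt_one (by norm_num) (by norm_num)]
    norm_num
  linarith

lemma geom_tail (j₀ c : ℕ) : ∑ j ∈ Finset.Ico j₀ c, (1/2 : ℝ) ^ j ≤ (1/2 : ℝ) ^ j₀ * 2 := by
  rcases le_total j₀ c with hc | hc
  · rw [Finset.sum_Ico_eq_sum_range]
    have heq : ∑ i ∈ Finset.range (c - j₀), (1/2 : ℝ) ^ (j₀ + i)
        = (1/2 : ℝ) ^ j₀ * ∑ i ∈ Finset.range (c - j₀), (1/2 : ℝ) ^ i := by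
      rw [Finset.mul_sum]
      exact Finset.sum_congr rfl fun i _ => pow_add _ _ _
    rw [heq]
    have := geom_range_le (c - j₀)
    have hpos : (0:ℝ) ≤ (1/2 : ℝ) ^ j₀ := by positivity
    nlinarith
  · rw [Finset.Ico_eq_empty (by omega)]
    have : (0:ℝ) ≤ (1/2 : ℝ) ^ j₀ * 2 := by positivity
    simpa using this

section withh2

variable (h : ℕ → C₀(ℕ, ℝ))
variable (rep : ∀ A : Set ℕ,
    (Summable fun n : ℕ =>
      ((min n ((A ∩ Set.Ico (2 ^ n) (2 ^ (n + 1))).ncard) : ℕ) : ℝ) / (n : ℝ) ^ 2) ↔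
    Summable (fun n : A => h n))

include rep

/-- Uniformization lemma "U": far finite sets with small submeasure have uniformly small
total variations. -/
lemma lemmaU {ε : ℝ} (hε : 0 < ε) :
    ∃ δ : ℝ, 0 < δ ∧ ∃ m : ℕ, ∀ G : Finset ℕ, (∀ i ∈ G, m ≤ i) →
      (∀ N, Sf G N ≤ δ) → ∀ k, nu h k G ≤ ε := by
  by_contra hcon
  push_neg at hcon
  obtain ⟨g, b, hb0, hmono, hble, hrange, hP⟩ := constr
    (fun j G => (∀ N, Sf G N ≤ (1/2 : ℝ) ^ j) ∧ ∃ k, ε < nu h k G)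
    (fun j m => by
      obtain ⟨G, h1, h2, h3⟩ := hcon ((1/2 : ℝ) ^ j) (by positivity) m
      exact ⟨G, h1, h2, h3⟩)
  set A : Set ℕ := ⋃ j', (g j' : Set ℕ) with hA
  have hsum : Summable (seriesTerm A) := by
    apply summable_of_sum_range_le (c := 2) (fun n => seriesTerm_nonneg A n)
    intro N
    have hterm : ∀ n ∈ Finset.range N, seriesTerm A n ≤
        ∑ j ∈ Finset.range N, ((min n (cnt (g j) n) : ℕ) : ℝ) / (n : ℝ) ^ 2 := by
      intro n hn
      rw [Finset.mem_range] at hn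
      obtain ⟨j, hj1, hj2⟩ := exists_interval hb0 hble n
      have hjN : j < N := lt_of_le_of_lt (le_trans (hble j) hj1) hn
      rw [hA, term_eq hmono hrange hj1 hj2]
      exact Finset.single_le_sum
        (f := fun j => ((min n (cnt (g j) n) : ℕ) : ℝ) / (n : ℝ) ^ 2)
        (fun j _ => by positivity) (Finset.mem_range.2 hjN)
    calc ∑ n ∈ Finset.range N, seriesTerm A n
        ≤ ∑ n ∈ Finset.range N, ∑ j ∈ Finset.range N,
            ((min n (cnt (g j) n) : ℕ) : ℝ) / (n : ℝ) ^ 2 := Finset.sum_le_sum hterm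
      _ = ∑ j ∈ Finset.range N, Sf (g j) N := by rw [Finset.sum_comm]; rfl
      _ ≤ ∑ j ∈ Finset.range N, (1/2 : ℝ) ^ j := Finset.sum_le_sum fun j _ => (hP j).1 N
      _ ≤ 2 := geom_range_le N
  have hS : Summable (fun n : A => h n) := (rep A).1 hsum
  obtain ⟨m, hm⟩ := tail_of_summable h hS ε hε
  obtain ⟨k, hk⟩ := (hP m).2
  have hfar : ∀ i ∈ g m, m ≤ i := by
    intro i hi
    have h1 := (hrange m i hi).1
    have h2 : m ≤ 2 ^ b m := le_trans (le_of_lt (Nat.lt_two_pow_self))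
      (Nat.pow_le_pow_right (by norm_num) (hble m))
    omega
  have hsub : ↑(g m) ⊆ A := by
    rw [hA]
    exact fun x hx => Set.mem_iUnion.2 ⟨m, hx⟩
  have := hm (g m) hsub hfar k
  linarith

/-- Uniformization lemma "W": there are `ε₀, m₀` such that any far finite set with submeasure
at least 1 has some coordinate with total variation exceeding `ε₀`. -/
lemma lemmaW : ∃ ε₀ : ℝ, 0 < ε₀ ∧ ∃ m₀ : ℕ, ∀ G : Finset ℕ, (∀ i ∈ G, m₀ ≤ i) →
    (∃ N, 1 ≤ Sf G N) → ∃ k, ε₀ < nu h k G := by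
  classical
  by_contra hcon
  push_neg at hcon
  obtain ⟨g, b, hb0, hmono, hble, hrange, hP⟩ := constr
    (fun j G => (∃ N, 1 ≤ Sf G N) ∧ ∀ k, nu h k G ≤ (1/2 : ℝ) ^ j)
    (fun j m => by
      obtain ⟨G, h1, h2, h3⟩ := hcon ((1/2 : ℝ) ^ j) (by positivity) m
      exact ⟨G, h1, h2, h3⟩)
  set A : Set ℕ := ⋃ j', (g j' : Set ℕ) with hA
  have hnosum : ¬ Summable (seriesTerm A) := by
    intro hsum
    obtain ⟨J, hJ⟩ := exists_nat_ge (∑' n, seriesTerm A n)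
    have hge : ∀ j, 1 ≤ Sf (g j) (b (j + 1)) := by
      intro j
      obtain ⟨N, hN⟩ := (hP j).1
      have hstab : Sf (g j) N ≤ Sf (g j) (b (j + 1)) :=
        Sf_le_stable (fun i hi => (hrange j i hi).2) N
      linarith
    have hdecomp : ∀ J' : ℕ, ∑ n ∈ Finset.range (b J'), seriesTerm A n
        = ∑ j ∈ Finset.range J', ∑ n ∈ Finset.Ico (b j) (b (j + 1)), seriesTerm A n := by
      intro J'
      induction J' with
      | zero => rw [hb0]; simp
      | succ J' ih =>
          rw [Finset.sum_range_succ, ← ih,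
            Finset.sum_range_add_sum_Ico _ (le_of_lt (hmono (by omega : J' < J' + 1)))]
    have hpart : (J : ℝ) + 1 ≤ ∑ n ∈ Finset.range (b (J + 1)), seriesTerm A n := by
      rw [hdecomp (J + 1)]
      have : ∀ j ∈ Finset.range (J + 1),
          (1 : ℝ) ≤ ∑ n ∈ Finset.Ico (b j) (b (j + 1)), seriesTerm A n := by
        intro j _
        rw [hA, sum_term_Ico hmono hrange j]
        exact hge j
      calc (J : ℝ) + 1 = ∑ _j ∈ Finset.range (J + 1), (1 : ℝ) := by simp
        _ ≤ _ := Finset.sum_le_sum this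
    have hle := Summable.sum_le_tsum (Finset.range (b (J + 1))) (fun n _ => seriesTerm_nonneg A n) hsum
    linarith
  have hnoS : ¬ Summable (fun n : A => h n) := fun hs => hnosum ((rep A).2 hs)
  have hnt : ¬ (∀ ε : ℝ, 0 < ε → ∃ m : ℕ, ∀ G : Finset ℕ, ↑G ⊆ A → (∀ i ∈ G, m ≤ i) →
      ∀ k, nu h k G ≤ ε) := fun ht => hnoS (summable_of_tail h ht)
  push_neg at hnt
  obtain ⟨ε', hε'pos, hbad⟩ := hnt
  obtain ⟨j₀, hj₀⟩ := exists_pow_lt_of_lt_one (show (0:ℝ) < ε' / 2 by positivity)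
    (show (1/2 : ℝ) < 1 by norm_num)
  obtain ⟨G, hGA, hGm, k, hk⟩ := hbad (2 ^ b j₀)
  set M := G.sup id with hM
  have hGsub : G ⊆ (Finset.Ico j₀ (M + 1)).biUnion g := by
    intro i hi
    have hiA : i ∈ A := hGA hi
    rw [hA, Set.mem_iUnion] at hiA
    obtain ⟨j, hj⟩ := hiA
    have hj' : i ∈ g j := hj
    refine Finset.mem_biUnion.2 ⟨j, ?_, hj'⟩
    rw [Finset.mem_Ico]
    constructor
    · have h1 := hGm i hi
      have h2 := (hrange j i hj').2
      have h3 : b j₀ < b (j + 1) := pow_lt_pow_nat (lt_of_le_of_lt h1 h2)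
      have h4 := hmono.lt_iff_lt.1 h3
      omega
    · have h1 := (hrange j i hj').1
      have h2 : j ≤ i := le_trans (hble j)
        (le_trans (le_of_lt (Nat.lt_two_pow_self)) h1)
      have hiM : i ≤ M := Finset.le_sup (f := id) hi
      omega
  have hnu : nu h k G ≤ (1/2 : ℝ) ^ j₀ * 2 := by
    calc nu h k G ≤ nu h k ((Finset.Ico j₀ (M + 1)).biUnion g) := nu_mono h k hGsub
      _ ≤ ∑ j ∈ Finset.Ico j₀ (M + 1), nu h k (g j) := nu_biUnion_le h k
      _ ≤ ∑ j ∈ Finset.Ico j₀ (M + 1), (1/2 : ℝ) ^ j :=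
          Finset.sum_le_sum fun j _ => (hP j).2 k
      _ ≤ (1/2 : ℝ) ^ j₀ * 2 := geom_tail j₀ (M + 1)
  linarith

end withh2

end Stmt14


namespace Stmt14

/-- from a finite set one can pick `t` elements whose total weight is at most
`t/card` of the total weight -/
lemma exists_cheap (s : Finset ℕ) (w : ℕ → ℝ) (hw : ∀ i ∈ s, 0 ≤ w i) :
    ∀ t : ℕ, t ≤ s.card → ∃ D : Finset ℕ, D ⊆ s ∧ D.card = t ∧
      (s.card : ℝ) * ∑ i ∈ D, w i ≤ (t : ℝ) * ∑ i ∈ s, w i := by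
  classical
  have bottom : ∀ t : ℕ, t ≤ s.card → ∃ D : Finset ℕ, D ⊆ s ∧ D.card = t ∧
      ∀ i ∈ D, ∀ j ∈ s \ D, w i ≤ w j := by
    intro t
    induction t with
    | zero => exact fun _ => ⟨∅, by simp⟩
    | succ t ih =>
        intro hts
        obtain ⟨D, hDs, hDcard, hDmin⟩ := ih (by omega)
        have hne : (s \ D).Nonempty := by
          rw [← Finset.card_pos, Finset.card_sdiff_of_subset hDs]
          omega
        obtain ⟨j₀, hj₀mem, hj₀min⟩ := Finset.exists_min_image (s \ D) w hne
        have hj₀s : j₀ ∈ s := (Finset.mem_sdiff.1 hj₀mem).1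
        have hj₀D : j₀ ∉ D := (Finset.mem_sdiff.1 hj₀mem).2
        refine ⟨insert j₀ D, Finset.insert_subset hj₀s hDs, ?_, ?_⟩
        · rw [Finset.card_insert_of_notMem hj₀D, hDcard]
        · intro i hi j hj
          have hjD : j ∈ s \ D := by
            rw [Finset.mem_sdiff] at hj ⊢
            exact ⟨hj.1, fun hmem => hj.2 (Finset.mem_insert_of_mem hmem)⟩
          rcases Finset.mem_insert.1 hi with rfl | hiD
          · exact hj₀min j hjD
          · exact hDmin i hiD j hjD
  intro t hts
  obtain ⟨D, hDs, hDcard, hDmin⟩ := bottom t hts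
  refine ⟨D, hDs, hDcard, ?_⟩
  set c := (s \ D).card with hc
  have hcard : c + t = s.card := by
    rw [hc, ← hDcard]
    exact Finset.card_sdiff_add_card_eq_card hDs
  have key : (c : ℝ) * ∑ i ∈ D, w i ≤ (t : ℝ) * ∑ j ∈ s \ D, w j := by
    have h1 : ∑ i ∈ D, ∑ _j ∈ s \ D, w i ≤ ∑ i ∈ D, ∑ j ∈ s \ D, w j :=
      Finset.sum_le_sum fun i hi => Finset.sum_le_sum fun j hj => hDmin i hi j hj
    calc (c : ℝ) * ∑ i ∈ D, w i = ∑ i ∈ D, ∑ _j ∈ s \ D, w i := by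
          rw [Finset.mul_sum]
          exact Finset.sum_congr rfl fun i _ => by
            rw [Finset.sum_const, nsmul_eq_mul, hc]
      _ ≤ ∑ i ∈ D, ∑ j ∈ s \ D, w j := h1
      _ = (t : ℝ) * ∑ j ∈ s \ D, w j := by
          rw [Finset.sum_const, nsmul_eq_mul, hDcard]
  have hsplit : ∑ j ∈ s \ D, w j + ∑ i ∈ D, w i = ∑ i ∈ s, w i :=
    Finset.sum_sdiff hDs
  have hcast : (s.card : ℝ) = (c : ℝ) + (t : ℝ) := by
    rw [← hcard]
    push_cast
    ring
  have e1 : (s.card : ℝ) * ∑ i ∈ D, w i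
      = (c : ℝ) * ∑ i ∈ D, w i + (t : ℝ) * ∑ i ∈ D, w i := by rw [hcast]; ring
  have e2 : (t : ℝ) * ∑ i ∈ s, w i
      = (t : ℝ) * ∑ j ∈ s \ D, w j + (t : ℝ) * ∑ i ∈ D, w i := by rw [← hsplit]; ring
  linarith

lemma nat_le_pow32 (n : ℕ) : (n : ℝ) ≤ (3/2 : ℝ) ^ n := by
  induction n with
  | zero => norm_num
  | succ n ih =>
      rcases Nat.lt_or_ge n 2 with hs | hs
      · interval_cases n <;> norm_num
      · have h2 : (2 : ℝ) ≤ (n : ℝ) := by exact_mod_cast hs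
        have hp : (3/2 : ℝ) ^ (n + 1) = (3/2) * (3/2 : ℝ) ^ n := by ring
        push_cast
        nlinarith

lemma n_div_pow (n : ℕ) : (n : ℝ) / (2 : ℝ) ^ n ≤ (3/4 : ℝ) ^ n := by
  have h1 := nat_le_pow32 n
  have h2 : (0 : ℝ) < 2 ^ n := by positivity
  rw [div_le_iff₀ h2]
  have h3 : (3/4 : ℝ) ^ n * 2 ^ n = (3/2) ^ n := by
    rw [← mul_pow]
    norm_num
  linarith

lemma geom_range_le34 (N : ℕ) : ∑ i ∈ Finset.range N, (3/4 : ℝ) ^ i ≤ 4 := by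
  have hsum : Summable (fun i : ℕ => (3/4 : ℝ) ^ i) :=
    summable_geometric_of_lt_one (by norm_num) (by norm_num)
  have h1 : ∑ i ∈ Finset.range N, (3/4 : ℝ) ^ i ≤ ∑' i, (3/4 : ℝ) ^ i :=
    Summable.sum_le_tsum _ (fun i _ => by positivity) hsum
  have h2 : ∑' i, (3/4 : ℝ) ^ i = 4 := by
    rw [tsum_geometric_of_lt_one (by norm_num) (by norm_num)]
    norm_num
  linarith

lemma geom_tail34 (j₀ c : ℕ) : ∑ j ∈ Finset.Ico j₀ c, (3/4 : ℝ) ^ j ≤ (3/4 : ℝ) ^ j₀ * 4 := by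
  rcases le_total j₀ c with hc | hc
  · rw [Finset.sum_Ico_eq_sum_range]
    have heq : ∑ i ∈ Finset.range (c - j₀), (3/4 : ℝ) ^ (j₀ + i)
        = (3/4 : ℝ) ^ j₀ * ∑ i ∈ Finset.range (c - j₀), (3/4 : ℝ) ^ i := by
      rw [Finset.mul_sum]
      exact Finset.sum_congr rfl fun i _ => pow_add _ _ _
    rw [heq]
    have := geom_range_le34 (c - j₀)
    have hpos : (0 : ℝ) ≤ (3/4 : ℝ) ^ j₀ := by positivity
    nlinarith
  · rw [Finset.Ico_eq_empty (by omega)]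
    have : (0:ℝ) ≤ (3/4 : ℝ) ^ j₀ * 4 := by positivity
    simpa using this

/-- value of `Sf` on a full block -/
lemma Sf_blk_le {n : ℕ} (hn : 1 ≤ n) {δ : ℝ} (hδ0 : 0 ≤ δ) (hδ : 1 / (n : ℝ) ≤ δ) (N : ℕ) :
    Sf (blk n) N ≤ δ := by
  classical
  have hterm : ∀ n' ∈ Finset.range N,
      ((min n' (cnt (blk n) n') : ℕ) : ℝ) / (n' : ℝ) ^ 2
        = if n' = n then 1 / (n : ℝ) else 0 := by
    intro n' _
    rcases eq_or_ne n' n with rfl | hne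
    · have hcnt : cnt (blk n') n' = 2 ^ n' := by
        rw [cnt, Finset.inter_self, card_blk]
      rw [hcnt, if_pos rfl]
      have hmin : min n' (2 ^ n') = n' := min_eq_left (le_of_lt (Nat.lt_two_pow_self))
      rw [hmin]
      have hn'0 : (n' : ℝ) ≠ 0 := by
        have : 1 ≤ n' := hn
        positivity
      field_simp
    · have hcnt : cnt (blk n) n' = 0 := by
        rw [cnt, Finset.card_eq_zero, ← Finset.disjoint_iff_inter_eq_empty]
        exact blk_disjoint hne.symm
      rw [hcnt, if_neg hne]
      simp
  rw [Sf, Finset.sum_congr rfl hterm, Finset.sum_ite_eq' (Finset.range N) n fun _ => 1 / (n:ℝ)]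
  split
  · exact hδ
  · exact hδ0

end Stmt14


namespace Stmt14

/-- The heart of the contradiction: assuming the uniform smallness property `hU`, one can
build finite sets with arbitrarily large submeasure but total variations bounded by
`ε₀/2 + r σ`, by picking in each block the cheapest points for the currently dangerous
coordinates. -/
lemma buildG (h : ℕ → C₀(ℕ, ℝ)) {ε₀ δ σ : ℝ} (hε₀ : 0 < ε₀) (hδ : 0 < δ) (hσ : 0 < σ)
    (m₀ m₁ : ℕ)
    (hU : ∀ G : Finset ℕ, (∀ i ∈ G, m₁ ≤ i) → (∀ N, Sf G N ≤ δ) → ∀ k, nu h k G ≤ ε₀ / 4) :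
    ∀ r : ℕ, ∃ (G : Finset ℕ) (B : ℕ), (∀ i ∈ G, max m₀ m₁ ≤ i) ∧ (∀ i ∈ G, i < 2 ^ B) ∧
      ((r : ℝ) * (δ / 2) ≤ Sf G B) ∧ (∀ k, nu h k G ≤ ε₀ / 2 + (r : ℝ) * σ) := by
  classical
  intro r
  induction r with
  | zero =>
      refine ⟨∅, 0, by simp, by simp, ?_, ?_⟩
      · rw [Sf_empty]
        simp
      · intro k
        have : nu h k ∅ = 0 := by simp [nu]
        rw [this]
        simp
        positivity
  | succ r ih =>
      obtain ⟨G, B, hfar, hlt, hSf, hnu⟩ := ih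
      -- threshold beyond which old coordinates are harmless
      have hev : ∀ᶠ k in atTop, nu h k G < ε₀ / 4 :=
        (tendsto_nu h G).eventually_lt_const (by positivity)
      obtain ⟨κ, hκ⟩ := eventually_atTop.1 hev
      -- choose the window start P
      obtain ⟨P₁, hP₁⟩ := exists_pow_lt_of_lt_one
        (show (0:ℝ) < σ / ((κ : ℝ) * ε₀ + 1) by positivity)
        (show (3/4 : ℝ) < 1 by norm_num)
      set P : ℕ := B + max m₀ m₁ + 1 + P₁ + ⌈2 / δ⌉₊ with hP
      have hPB : B ≤ P := by omega
      have hPm : max m₀ m₁ ≤ P := by omega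
      have hP0 : 1 ≤ P := by omega
      have hPP₁ : P₁ ≤ P := by omega
      have hPceil : ⌈2 / δ⌉₊ ≤ P := by omega
      have hPR : (0:ℝ) < (P : ℝ) := by
        have : (1:ℝ) ≤ (P:ℝ) := by exact_mod_cast hP0
        linarith
      have hPδ : 1 / (P : ℝ) ≤ δ / 2 := by
        have h1 : 2 / δ ≤ (⌈2 / δ⌉₊ : ℝ) := Nat.le_ceil _
        have h2 : ((⌈2 / δ⌉₊ : ℕ) : ℝ) ≤ (P : ℝ) := by exact_mod_cast hPceil
        rw [div_le_div_iff₀ hPR (by norm_num : (0:ℝ) < 2)]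
        have h3 : 2 / δ ≤ (P : ℝ) := le_trans h1 h2
        calc (1:ℝ) * 2 = 2 := by ring
          _ = (2 / δ) * δ := by field_simp
          _ ≤ (P : ℝ) * δ := by
              have := mul_le_mul_of_nonneg_right h3 (le_of_lt hδ)
              linarith
          _ = δ * (P : ℝ) := by ring
      -- choose the window end Q : minimal with harmonic sum at least δ/2
      have hexQ : ∃ Q : ℕ, δ / 2 ≤ ∑ n ∈ Finset.Ico P Q, 1 / (n : ℝ) := by
        have hns : ¬ Summable (fun n : ℕ => 1 / (n : ℝ)) := Real.not_summable_one_div_natCast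
        rw [not_summable_iff_tendsto_nat_atTop_of_nonneg (fun n => by positivity)] at hns
        have hev2 := (hns.eventually_ge_atTop
          ((∑ i ∈ Finset.range P, 1 / (i : ℝ)) + δ / 2)).and (eventually_ge_atTop P)
        obtain ⟨Q, hQ1, hQ2⟩ := hev2.exists
        refine ⟨Q, ?_⟩
        rw [Finset.sum_Ico_eq_sub _ hQ2]
        linarith
      have hdec : DecidablePred (fun Q : ℕ => δ / 2 ≤ ∑ n ∈ Finset.Ico P Q, 1 / (n : ℝ)) :=
        fun _ => Classical.dec _
      set Q := @Nat.find _ hdec hexQ with hQdef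
      have hQspec : δ / 2 ≤ ∑ n ∈ Finset.Ico P Q, 1 / (n : ℝ) := @Nat.find_spec _ hdec hexQ
      have hQmin : ∀ Q' < Q, ¬ (δ / 2 ≤ ∑ n ∈ Finset.Ico P Q', 1 / (n : ℝ)) :=
        fun Q' hQ' => @Nat.find_min _ hdec hexQ _ hQ'
      have hPQ : P < Q := by
        by_contra hc
        push_neg at hc
        rw [Finset.Ico_eq_empty (by omega)] at hQspec
        simp at hQspec
        linarith
      have hWub : ∑ n ∈ Finset.Ico P Q, 1 / (n : ℝ) ≤ δ := by
        have hQ1 : P ≤ Q - 1 := by omega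
        have hQeq : Q = (Q - 1) + 1 := by omega
        have hsucc : ∑ n ∈ Finset.Ico P Q, 1 / (n : ℝ)
            = ∑ n ∈ Finset.Ico P (Q - 1), 1 / (n : ℝ) + 1 / ((Q - 1 : ℕ) : ℝ) := by
          have hst := Finset.sum_Ico_succ_top hQ1 (fun n : ℕ => 1 / (n : ℝ))
          rw [← hQeq] at hst
          exact hst
        have hless : ∑ n ∈ Finset.Ico P (Q - 1), 1 / (n : ℝ) < δ / 2 := by
          have := hQmin (Q - 1) (by omega)
          linarith [lt_of_not_ge this]
        have hlast : 1 / ((Q - 1 : ℕ) : ℝ) ≤ 1 / (P : ℝ) := by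
          apply one_div_le_one_div_of_le hPR
          exact_mod_cast hQ1
        rw [hsucc]
        linarith
      -- weights and cheap sets
      set w : ℕ → ℝ := fun i => ∑ k' ∈ Finset.range κ, |h i k'| with hw
      have hwnn : ∀ i, 0 ≤ w i := fun i => Finset.sum_nonneg fun _ _ => abs_nonneg _
      have hDex : ∀ n : ℕ, ∃ D : Finset ℕ, D ⊆ blk n ∧ D.card = n ∧
          ((blk n).card : ℝ) * ∑ i ∈ D, w i ≤ (n : ℝ) * ∑ i ∈ blk n, w i := by
        intro n
        apply exists_cheap (blk n) w (fun i _ => hwnn i) n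
        rw [card_blk]
        exact le_of_lt (Nat.lt_two_pow_self)
      choose D hD1 hD2 hD3 using hDex
      set piece : Finset ℕ := (Finset.Ico P Q).biUnion D with hpiece
      -- membership facts
      have hpmem : ∀ i ∈ piece, 2 ^ P ≤ i ∧ i < 2 ^ Q := by
        intro i hi
        obtain ⟨n, hn, hin⟩ := Finset.mem_biUnion.1 hi
        rw [Finset.mem_Ico] at hn
        have hblk := mem_blk.1 (hD1 n hin)
        constructor
        · exact le_trans (Nat.pow_le_pow_right (by norm_num) hn.1) hblk.1
        · exact lt_of_lt_of_le hblk.2 (Nat.pow_le_pow_right (by norm_num) (by omega))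
      have hPltpow : P < 2 ^ P := Nat.lt_two_pow_self
      have hpfar : ∀ i ∈ piece, max m₀ m₁ ≤ i := by
        intro i hi
        have := (hpmem i hi).1
        omega
      -- blocks of the piece
      have hpblk_in : ∀ n ∈ Finset.Ico P Q, piece ∩ blk n = D n := by
        intro n hn
        apply Finset.Subset.antisymm
        · intro x hx
          rw [Finset.mem_inter] at hx
          obtain ⟨n', hn', hxn'⟩ := Finset.mem_biUnion.1 hx.1
          rcases eq_or_ne n' n with rfl | hne
          · exact hxn'
          · exact absurd hx.2 (Finset.disjoint_left.1 (blk_disjoint hne) (hD1 n' hxn'))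
        · intro x hx
          exact Finset.mem_inter.2 ⟨Finset.mem_biUnion.2 ⟨n, hn, hx⟩, hD1 n hx⟩
      have hpblk_out : ∀ n, n ∉ Finset.Ico P Q → piece ∩ blk n = ∅ := by
        intro n hn
        rw [Finset.eq_empty_iff_forall_notMem]
        intro x hx
        rw [Finset.mem_inter] at hx
        obtain ⟨n', hn', hxn'⟩ := Finset.mem_biUnion.1 hx.1
        rcases eq_or_ne n' n with rfl | hne
        · exact hn hn'
        · exact (Finset.disjoint_left.1 (blk_disjoint hne)) (hD1 n' hxn') hx.2
      have hcnt_piece : ∀ n, cnt piece n = if n ∈ Finset.Ico P Q then n else 0 := by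
        intro n
        rcases em (n ∈ Finset.Ico P Q) with hn | hn
        · rw [if_pos hn, cnt, hpblk_in n hn, hD2]
        · rw [if_neg hn, cnt, hpblk_out n hn]
          simp
      -- Sf of the piece
      have hSf_piece : ∀ N, Sf piece N
          = ∑ n ∈ Finset.range N ∩ Finset.Ico P Q, 1 / (n : ℝ) := by
        intro N
        rw [Sf, ← Finset.sum_ite_mem]
        apply Finset.sum_congr rfl
        intro n hn
        rw [hcnt_piece n]
        rcases em (n ∈ Finset.Ico P Q) with hmem | hmem
        · rw [if_pos hmem, if_pos hmem, min_self]
          have hn1 : 1 ≤ n := le_trans hP0 (Finset.mem_Ico.1 hmem).1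
          have hn0 : (n : ℝ) ≠ 0 := by positivity
          field_simp
        · rw [if_neg hmem, if_neg hmem]
          simp
      have hSf_piece_le : ∀ N, Sf piece N ≤ δ := by
        intro N
        rw [hSf_piece N]
        calc ∑ n ∈ Finset.range N ∩ Finset.Ico P Q, 1 / (n : ℝ)
            ≤ ∑ n ∈ Finset.Ico P Q, 1 / (n : ℝ) := by
              apply Finset.sum_le_sum_of_subset_of_nonneg Finset.inter_subset_right
              intro n _ _
              positivity
          _ ≤ δ := hWub
      have hSf_piece_Q : δ / 2 ≤ Sf piece Q := by
        rw [hSf_piece Q]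
        have : Finset.range Q ∩ Finset.Ico P Q = Finset.Ico P Q := by
          apply Finset.inter_eq_right.2
          intro n hn
          rw [Finset.mem_range]
          exact (Finset.mem_Ico.1 hn).2
        rw [this]
        exact hQspec
      -- uniform bound on the piece
      have hpU : ∀ k, nu h k piece ≤ ε₀ / 4 := by
        intro k
        apply hU piece (fun i hi => le_trans (le_trans (le_max_right m₀ m₁) hPm)
          (by have := (hpmem i hi).1; omega)) hSf_piece_le
      -- dodge bound for small coordinates
      have hpdodge : ∀ k < κ, nu h k piece ≤ σ := by
        intro k hk
        have hdisjD : (↑(Finset.Ico P Q) : Set ℕ).PairwiseDisjoint D := by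
          intro a _ b _ hab
          exact Finset.disjoint_left.2 fun x hxa hxb =>
            (Finset.disjoint_left.1 (blk_disjoint hab)) (hD1 a hxa) (hD1 b hxb)
        have hsplit : nu h k piece = ∑ n ∈ Finset.Ico P Q, nu h k (D n) := by
          rw [hpiece, nu, Finset.sum_biUnion hdisjD]
          rfl
        have hblock : ∀ n ∈ Finset.Ico P Q, nu h k (D n) ≤ (κ : ℝ) * (ε₀ / 4) * (3/4) ^ n := by
          intro n hn
          rw [Finset.mem_Ico] at hn
          have hn1 : 1 ≤ n := le_trans hP0 hn.1
          -- nu ≤ weight sum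
          have h1 : nu h k (D n) ≤ ∑ i ∈ D n, w i := by
            apply Finset.sum_le_sum
            intro i _
            rw [hw]
            exact Finset.single_le_sum (f := fun k' => |h i k'|)
              (fun _ _ => abs_nonneg _) (Finset.mem_range.2 hk)
          -- total block weight
          have h2 : ∑ i ∈ blk n, w i ≤ (κ : ℝ) * (ε₀ / 4) := by
            rw [hw, Finset.sum_comm]
            calc ∑ k' ∈ Finset.range κ, ∑ i ∈ blk n, |h i k'|
                ≤ ∑ k' ∈ Finset.range κ, ε₀ / 4 := by
                  apply Finset.sum_le_sum
                  intro k' _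
                  apply hU (blk n)
                  · intro i hi
                    have hblki := (mem_blk.1 hi).1
                    have : 2 ^ P ≤ 2 ^ n := Nat.pow_le_pow_right (by norm_num) hn.1
                    omega
                  · exact Sf_blk_le hn1 (le_of_lt hδ)
                      (by
                        have : 1 / (n : ℝ) ≤ 1 / (P : ℝ) := by
                          apply one_div_le_one_div_of_le hPR
                          exact_mod_cast hn.1
                        linarith)
              _ = (κ : ℝ) * (ε₀ / 4) := by
                  rw [Finset.sum_const, Finset.card_range, nsmul_eq_mul]
        -- cheapness
          have h3 : ((blk n).card : ℝ) * ∑ i ∈ D n, w i ≤ (n : ℝ) * ∑ i ∈ blk n, w i := hD3 n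
          rw [card_blk] at h3
          have hpow : (0:ℝ) < (2:ℝ) ^ n := by positivity
          have hpowcast : (((2:ℕ) ^ n : ℕ) : ℝ) = (2:ℝ) ^ n := by push_cast; ring
          rw [hpowcast] at h3
          have h4 : ∑ i ∈ D n, w i ≤ (n : ℝ) * ((κ : ℝ) * (ε₀ / 4)) / 2 ^ n := by
            rw [le_div_iff₀ hpow]
            have hsumnn : (0:ℝ) ≤ ∑ i ∈ blk n, w i :=
              Finset.sum_nonneg fun i _ => hwnn i
            have h5 : (n : ℝ) * ∑ i ∈ blk n, w i ≤ (n : ℝ) * ((κ : ℝ) * (ε₀ / 4)) := by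
              apply mul_le_mul_of_nonneg_left h2
              positivity
            calc (∑ i ∈ D n, w i) * 2 ^ n = 2 ^ n * ∑ i ∈ D n, w i := by ring
              _ ≤ (n : ℝ) * ∑ i ∈ blk n, w i := h3
              _ ≤ (n : ℝ) * ((κ : ℝ) * (ε₀ / 4)) := h5
          have h6 : (n : ℝ) * ((κ : ℝ) * (ε₀ / 4)) / 2 ^ n
              ≤ (κ : ℝ) * (ε₀ / 4) * (3/4) ^ n := by
            have hnd := n_div_pow n
            have hκε : (0:ℝ) ≤ (κ : ℝ) * (ε₀ / 4) := by positivity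
            calc (n : ℝ) * ((κ : ℝ) * (ε₀ / 4)) / 2 ^ n
                = ((n : ℝ) / 2 ^ n) * ((κ : ℝ) * (ε₀ / 4)) := by ring
              _ ≤ (3/4) ^ n * ((κ : ℝ) * (ε₀ / 4)) := by
                  apply mul_le_mul_of_nonneg_right hnd hκε
              _ = (κ : ℝ) * (ε₀ / 4) * (3/4) ^ n := by ring
          linarith
        rw [hsplit]
        calc ∑ n ∈ Finset.Ico P Q, nu h k (D n)
            ≤ ∑ n ∈ Finset.Ico P Q, (κ : ℝ) * (ε₀ / 4) * (3/4) ^ n :=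
              Finset.sum_le_sum hblock
          _ = (κ : ℝ) * (ε₀ / 4) * ∑ n ∈ Finset.Ico P Q, (3/4 : ℝ) ^ n := by
              rw [Finset.mul_sum]
          _ ≤ (κ : ℝ) * (ε₀ / 4) * ((3/4 : ℝ) ^ P * 4) := by
              apply mul_le_mul_of_nonneg_left (geom_tail34 P Q)
              positivity
          _ = (κ : ℝ) * ε₀ * (3/4 : ℝ) ^ P := by ring
          _ ≤ σ := by
              have hmono34 : (3/4 : ℝ) ^ P ≤ (3/4 : ℝ) ^ P₁ :=
                pow_le_pow_of_le_one (by norm_num) (by norm_num) hPP₁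
              have hlt : (3/4 : ℝ) ^ P < σ / ((κ : ℝ) * ε₀ + 1) := lt_of_le_of_lt hmono34 hP₁
              have hpos : (0:ℝ) < (κ : ℝ) * ε₀ + 1 := by positivity
              have hκεnn : (0:ℝ) ≤ (κ : ℝ) * ε₀ := by positivity
              have h7 : (κ : ℝ) * ε₀ * (3/4 : ℝ) ^ P
                  ≤ ((κ : ℝ) * ε₀ + 1) * (3/4 : ℝ) ^ P := by
                apply mul_le_mul_of_nonneg_right _ (by positivity)
                linarith
              have h8 : ((κ : ℝ) * ε₀ + 1) * (3/4 : ℝ) ^ P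
                  < ((κ : ℝ) * ε₀ + 1) * (σ / ((κ : ℝ) * ε₀ + 1)) :=
                mul_lt_mul_of_pos_left hlt hpos
              have h9 : ((κ : ℝ) * ε₀ + 1) * (σ / ((κ : ℝ) * ε₀ + 1)) = σ := by
                field_simp
              linarith
      -- assemble
      have hdisjGp : Disjoint G piece := by
        rw [Finset.disjoint_left]
        intro i hiG hip
        have h1 := hlt i hiG
        have h2 := (hpmem i hip).1
        have h3 : (2:ℕ) ^ B ≤ 2 ^ P := Nat.pow_le_pow_right (by norm_num) hPB
        omega
      refine ⟨G ∪ piece, Q, ?_, ?_, ?_, ?_⟩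
      · intro i hi
        rcases Finset.mem_union.1 hi with hi | hi
        · exact hfar i hi
        · exact hpfar i hi
      · intro i hi
        rcases Finset.mem_union.1 hi with hi | hi
        · have h1 := hlt i hi
          have h2 : (2:ℕ) ^ B ≤ 2 ^ Q := Nat.pow_le_pow_right (by norm_num) (by omega)
          omega
        · exact (hpmem i hi).2
      · -- submeasure grows by at least δ/2
        have hsplitSf : Sf (G ∪ piece) Q
            = Sf (G ∪ piece) P + ∑ n ∈ Finset.Ico P Q,
                ((min n (cnt (G ∪ piece) n) : ℕ) : ℝ) / (n : ℝ) ^ 2 := by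
          rw [Sf, Sf, ← Finset.sum_range_add_sum_Ico _ (le_of_lt hPQ)]
        have hlow : ∀ n, n < P → cnt (G ∪ piece) n = cnt G n := by
          intro n hn
          have : (G ∪ piece) ∩ blk n = G ∩ blk n := by
            rw [Finset.union_inter_distrib_right, hpblk_out n
              (by rw [Finset.mem_Ico]; omega), Finset.union_empty]
          rw [cnt, this, cnt]
        have hhigh : ∀ n ∈ Finset.Ico P Q, cnt (G ∪ piece) n = n := by
          intro n hn
          have hGn : G ∩ blk n = ∅ := by
            rw [Finset.eq_empty_iff_forall_notMem]
            intro x hx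
            rw [Finset.mem_inter, mem_blk] at hx
            have h1 := hlt x hx.1
            have h2 : (2:ℕ) ^ B ≤ 2 ^ n :=
              Nat.pow_le_pow_right (by norm_num) (le_trans hPB (Finset.mem_Ico.1 hn).1)
            omega
          have : (G ∪ piece) ∩ blk n = D n := by
            rw [Finset.union_inter_distrib_right, hGn, hpblk_in n hn, Finset.empty_union]
          rw [cnt, this, hD2]
        have hterm1 : Sf (G ∪ piece) P = Sf G P := by
          rw [Sf, Sf]
          apply Finset.sum_congr rfl
          intro n hn
          rw [hlow n (Finset.mem_range.1 hn)]
        have hterm2 : ∑ n ∈ Finset.Ico P Q,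
            ((min n (cnt (G ∪ piece) n) : ℕ) : ℝ) / (n : ℝ) ^ 2
            = ∑ n ∈ Finset.Ico P Q, 1 / (n : ℝ) := by
          apply Finset.sum_congr rfl
          intro n hn
          rw [hhigh n hn, min_self]
          have hn1 : 1 ≤ n := le_trans hP0 (Finset.mem_Ico.1 hn).1
          have hn0 : (n : ℝ) ≠ 0 := by positivity
          field_simp
        have hSfGP : Sf G B ≤ Sf G P := Sf_mono G hPB
        rw [hsplitSf, hterm1, hterm2]
        push_cast
        linarith
      · -- total variation bound
        intro k
        rw [nu_union h k hdisjGp]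
        rcases Nat.lt_or_ge k κ with hk | hk
        · have h1 := hnu k
          have h2 := hpdodge k hk
          push_cast
          linarith
        · have h1 := le_of_lt (hκ k hk)
          have h2 := hpU k
          have h3 : (0:ℝ) ≤ (r : ℝ) * σ := by positivity
          push_cast
          linarith

end Stmt14

/-- Farah's ideal
`J_F = {A : ∑_{n≥1} min(n, |A ∩ [2ⁿ, 2ⁿ⁺¹)|)/n² < ∞}` is not representable in `c₀`.
(The `n = 0` term of the series below is `0/0 = 0`, so the sum is over `n ≥ 1`.) -/
theorem stmt14 :
    ¬ ∃ h : ℕ → C₀(ℕ, ℝ),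
      ∀ A : Set ℕ,
        (Summable fun n : ℕ =>
          ((min n ((A ∩ Set.Ico (2 ^ n) (2 ^ (n + 1))).ncard) : ℕ) : ℝ) / (n : ℝ) ^ 2) ↔
        Summable (fun n : A => h n) := by
  rintro ⟨h, rep⟩
  obtain ⟨ε₀, hε₀, m₀, hW⟩ := Stmt14.lemmaW h rep
  obtain ⟨δ, hδ, m₁, hU⟩ := Stmt14.lemmaU h rep (show (0:ℝ) < ε₀ / 4 by positivity)
  set R : ℕ := ⌈2 / δ⌉₊ + 1 with hR
  have hRpos : 0 < R := by omega
  have hR' : (0:ℝ) < (R : ℝ) := by exact_mod_cast hRpos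
  have hRδ : (1:ℝ) ≤ (R : ℝ) * (δ / 2) := by
    have h1 : 2 / δ ≤ (⌈2 / δ⌉₊ : ℝ) := Nat.le_ceil _
    have h3 : 2 / δ ≤ (R : ℝ) := by
      rw [hR]
      push_cast
      linarith
    calc (1:ℝ) = (2 / δ) * (δ / 2) := by field_simp
      _ ≤ (R : ℝ) * (δ / 2) := by
          apply mul_le_mul_of_nonneg_right h3
          positivity
  set σ : ℝ := ε₀ / (4 * R) with hσdef
  have hσ : 0 < σ := by
    rw [hσdef]
    apply div_pos hε₀
    linarith
  obtain ⟨G, B, hfar, hlt, hSf, hnu⟩ := Stmt14.buildG h hε₀ hδ hσ m₀ m₁ hU R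
  have hfar₀ : ∀ i ∈ G, m₀ ≤ i := fun i hi => le_trans (le_max_left _ _) (hfar i hi)
  obtain ⟨k, hk⟩ := hW G hfar₀ ⟨B, le_trans hRδ hSf⟩
  have hb := hnu k
  have hRε : (R : ℝ) * σ = ε₀ / 4 := by
    rw [hσdef]
    field_simp
  rw [hRε] at hb
  linarith
end

section
/- Let x : ℕ → ℓ₁ be the Rademacher-type sequence defined in the context. If X ⊆ ℕ is such that ∑_{i∈X} x_i converges unconditionally in ℓ₁, then ∑_{n∈A_X} 1/(n+1) < ∞, where A_X = {n ∈ ℕ : P_n ∩ X ≠ ∅}. -/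
open Filter Topology

private lemma tri_succ (n : ℕ) : (n + 1) * (n + 2) / 2 = n * (n + 1) / 2 + (n + 1) := by
  have h2 : 2 ∣ n * (n + 1) := (Nat.even_mul_succ_self n).two_dvd
  have h : (n + 1) * (n + 2) = n * (n + 1) + 2 * (n + 1) := by ring
  omega

private lemma tri_mono {m n : ℕ} (h : m ≤ n) : m * (m + 1) / 2 ≤ n * (n + 1) / 2 :=
  Nat.div_le_div_right (Nat.mul_le_mul h (by omega))

set_option maxHeartbeats 1000000 in
/-- for the Rademacher-type sequence `x : ℕ → ℓ₁` (described by the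
hypotheses `hx0`, `hx`, `hxsupp`: `x 0 = e₀`, and for `n ≥ 1`, `0 ≤ j ≤ n`, the element
`i = n(n+1)/2 + j` of `P_n` has `x i` supported on `Q_n = [2ⁿ−1, 2ⁿ⁺¹−1)` with values
`(−1)^{⌊k/2^{n−j}⌋}/(n·2ⁿ)`), if `∑_{i∈X} x i` converges unconditionally in `ℓ₁`, then
`∑_{n ∈ A_X} 1/(n+1) < ∞`, where `A_X = {n : P_n ∩ X ≠ ∅}`. -/
theorem stmt17 (x : ℕ → lp (fun _ : ℕ => ℝ) 1)
    (hx0 : ∀ k : ℕ, (x 0 : ℕ → ℝ) k = if k = 0 then 1 else 0)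
    (hx : ∀ n : ℕ, 1 ≤ n → ∀ j : ℕ, j ≤ n → ∀ k : ℕ, k < 2 ^ n →
      (x (n * (n + 1) / 2 + j) : ℕ → ℝ) (2 ^ n - 1 + k) =
        (-1 : ℝ) ^ (k / 2 ^ (n - j)) / ((n : ℝ) * 2 ^ n))
    (hxsupp : ∀ n : ℕ, 1 ≤ n → ∀ j : ℕ, j ≤ n → ∀ m : ℕ,
      (m < 2 ^ n - 1 ∨ 2 ^ (n + 1) - 1 ≤ m) →
      (x (n * (n + 1) / 2 + j) : ℕ → ℝ) m = 0)
    (X : Set ℕ)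
    (hX : Summable (fun i : X => x i)) :
    Summable (fun n : {n : ℕ | (Set.Ico (n * (n + 1) / 2) ((n + 1) * (n + 2) / 2) ∩ X).Nonempty} =>
      (1 : ℝ) / ((n : ℕ) + 1)) := by
  classical
  set A : Set ℕ :=
    {n : ℕ | (Set.Ico (n * (n + 1) / 2) ((n + 1) * (n + 2) / 2) ∩ X).Nonempty} with hA
  -- choose a representative in each nonempty block
  have hch : ∀ n : ℕ, ∃ i, n ∈ A →
      n * (n + 1) / 2 ≤ i ∧ i < (n + 1) * (n + 2) / 2 ∧ i ∈ X := by
    intro n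
    by_cases hn : n ∈ A
    · obtain ⟨i, hi⟩ := hn
      exact ⟨i, fun _ => ⟨hi.1.1, hi.1.2, hi.2⟩⟩
    · exact ⟨0, fun h => absurd h hn⟩
  choose idx hidx using hch
  -- the index set of blocks with n ≥ 1
  set s : Set ℕ := {n : ℕ | 1 ≤ n ∧ n ∈ A} with hs
  have hlt : ∀ m n : ℕ, m < n → m ∈ A → n ∈ A → idx m < idx n := by
    intro m n h hm hn
    have h1 := (hidx m hm).2.1
    have h2 := (hidx n hn).1
    have h3 : (m + 1) * (m + 2) / 2 ≤ n * (n + 1) / 2 := by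
      have := tri_mono (show m + 1 ≤ n by omega)
      simpa [show m + 1 + 1 = m + 2 by omega] using this
    omega
  have hinj : Function.Injective (fun n : s => (⟨idx n, (hidx n n.2.2).2.2⟩ : X)) := by
    intro a b hab
    have h : idx (a : ℕ) = idx (b : ℕ) := congrArg Subtype.val hab
    rcases lt_trichotomy (a : ℕ) (b : ℕ) with hlt' | heq | hgt
    · exact absurd h (Nat.ne_of_lt (hlt _ _ hlt' a.2.2 b.2.2))
    · exact Subtype.ext heq
    · exact absurd h.symm (Nat.ne_of_lt (hlt _ _ hgt b.2.2 a.2.2))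
  have hys : Summable (fun n : s => x (idx n)) := hX.comp_injective hinj
  set y : ℕ → lp (fun _ : ℕ => ℝ) 1 := s.indicator (fun n => x (idx n)) with hy_def
  have hy : Summable y := summable_subtype_iff_indicator.mp hys
  set S : lp (fun _ : ℕ => ℝ) 1 := ∑' n, y n with hS_def
  have hS : HasSum y S := hy.hasSum
  -- coordinate evaluation
  have hev : ∀ k : ℕ, HasSum (fun n => (y n : ℕ → ℝ) k) ((S : ℕ → ℝ) k) := by
    intro k
    have hcont : Continuous (fun v : lp (fun _ : ℕ => ℝ) 1 => (v : ℕ → ℝ) k) := by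
      refine (LipschitzWith.of_dist_le_mul (K := 1) fun f g => ?_).continuous
      have h := lp.norm_apply_le_norm (p := 1) one_ne_zero (f - g) k
      simpa [dist_eq_norm, lp.coeFn_sub, Pi.sub_apply] using h
    exact hS.map (AddMonoidHom.mk' (fun v : lp (fun _ : ℕ => ℝ) 1 => (v : ℕ → ℝ) k)
      (fun a b => by simp [lp.coeFn_add])) hcont
  -- block decomposition of the chosen indices
  have hj : ∀ n, n ∈ A → ∃ j, j ≤ n ∧ idx n = n * (n + 1) / 2 + j := by
    intro n hn
    refine ⟨idx n - n * (n + 1) / 2, ?_, ?_⟩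
    · have h1 := (hidx n hn).1
      have h2 := (hidx n hn).2.1
      have h3 := tri_succ n
      omega
    · have h1 := (hidx n hn).1
      omega
  have h2pow : ∀ n : ℕ, (1 : ℕ) ≤ 2 ^ n := fun n => Nat.one_le_two_pow
  -- off-block coordinates vanish
  have hzero : ∀ n, 1 ≤ n → ∀ m, m ≠ n → ∀ k, 2 ^ n - 1 ≤ k → k < 2 ^ (n + 1) - 1 →
      (y m : ℕ → ℝ) k = 0 := by
    intro n hn1 m hm k hk1 hk2
    by_cases hms : m ∈ s
    · obtain ⟨j, hj1, hj2⟩ := hj m hms.2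
      have hy_m : y m = x (idx m) := Set.indicator_of_mem hms _
      have hside : k < 2 ^ m - 1 ∨ 2 ^ (m + 1) - 1 ≤ k := by
        rcases (Ne.lt_or_gt hm) with h | h
        · right
          have : (2 : ℕ) ^ (m + 1) ≤ 2 ^ n := Nat.pow_le_pow_right (by norm_num) (by omega)
          omega
        · left
          have : (2 : ℕ) ^ (n + 1) ≤ 2 ^ m := Nat.pow_le_pow_right (by norm_num) (by omega)
          omega
      rw [hy_m, hj2]
      exact hxsupp m hms.1 j hj1 k hside
    · rw [hy_def]
      simp [Set.indicator_of_notMem hms]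
  -- coordinate values on the block
  have hSval : ∀ n, 1 ≤ n → n ∈ A → ∀ k, 2 ^ n - 1 ≤ k → k < 2 ^ (n + 1) - 1 →
      |(S : ℕ → ℝ) k| = 1 / ((n : ℝ) * 2 ^ n) := by
    intro n hn1 hnA k hk1 hk2
    have hSk : (S : ℕ → ℝ) k = (y n : ℕ → ℝ) k :=
      (hev k).unique (hasSum_single n (fun m hm => hzero n hn1 m hm k hk1 hk2))
    obtain ⟨j, hj1, hj2⟩ := hj n hnA
    have hns : n ∈ s := ⟨hn1, hnA⟩
    have hy_n : y n = x (idx n) := Set.indicator_of_mem hns _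
    set k' := k - (2 ^ n - 1) with hk'_def
    have hkk : k = 2 ^ n - 1 + k' := by have := h2pow n; omega
    have hk'lt : k' < 2 ^ n := by
      have h2n : (2 : ℕ) ^ (n + 1) = 2 * 2 ^ n := by ring
      have := h2pow n
      omega
    have hval := hx n hn1 j hj1 k' hk'lt
    rw [hSk, hy_n, hj2, hkk, hval, abs_div, abs_pow, abs_neg, abs_one, one_pow,
      abs_of_pos (by positivity : (0 : ℝ) < (n : ℝ) * 2 ^ n)]
  -- ℓ¹ norm as sum of absolute values of coordinates
  have hnorm : HasSum (fun k => |(S : ℕ → ℝ) k|) ‖S‖ := by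
    have h := lp.hasSum_norm (p := 1) (by norm_num) S
    simpa using h
  -- each block contributes 1/n
  have hblock : ∀ n, 1 ≤ n → n ∈ A →
      (∑ k ∈ Finset.Ico (2 ^ n - 1) (2 ^ (n + 1) - 1), |(S : ℕ → ℝ) k|) = 1 / (n : ℝ) := by
    intro n hn1 hnA
    have hcard : 2 ^ (n + 1) - 1 - (2 ^ n - 1) = 2 ^ n := by
      have h2n : (2 : ℕ) ^ (n + 1) = 2 * 2 ^ n := by ring
      have := h2pow n
      omega
    have hterm : ∀ k ∈ Finset.Ico (2 ^ n - 1) (2 ^ (n + 1) - 1),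
        |(S : ℕ → ℝ) k| = 1 / ((n : ℝ) * 2 ^ n) := fun k hk =>
      hSval n hn1 hnA k (Finset.mem_Ico.mp hk).1 (Finset.mem_Ico.mp hk).2
    rw [Finset.sum_congr rfl hterm, Finset.sum_const, Nat.card_Ico, hcard, nsmul_eq_mul]
    have hn0 : (n : ℝ) ≠ 0 := Nat.cast_ne_zero.mpr (by omega)
    have h2 : (2 : ℝ) ^ n ≠ 0 := by positivity
    push_cast
    field_simp
  -- finite families of blocks are bounded by ‖S‖
  have hFsum : ∀ F : Finset ℕ, (∀ n ∈ F, 1 ≤ n ∧ n ∈ A) →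
      ∑ n ∈ F, (1 : ℝ) / (n : ℝ) ≤ ‖S‖ := by
    intro F hF
    have hdisj : (F : Set ℕ).PairwiseDisjoint
        (fun n => Finset.Ico (2 ^ n - 1) (2 ^ (n + 1) - 1)) := by
      intro a _ b _ hab
      refine Finset.disjoint_left.mpr fun k hk1 hk2 => ?_
      rw [Finset.mem_Ico] at hk1 hk2
      rcases hab.lt_or_gt with h | h
      · have : (2 : ℕ) ^ (a + 1) ≤ 2 ^ b := Nat.pow_le_pow_right (by norm_num) (by omega)
        omega
      · have : (2 : ℕ) ^ (b + 1) ≤ 2 ^ a := Nat.pow_le_pow_right (by norm_num) (by omega)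
        omega
    calc ∑ n ∈ F, (1 : ℝ) / (n : ℝ)
        = ∑ n ∈ F, ∑ k ∈ Finset.Ico (2 ^ n - 1) (2 ^ (n + 1) - 1), |(S : ℕ → ℝ) k| :=
          Finset.sum_congr rfl fun n hn => (hblock n (hF n hn).1 (hF n hn).2).symm
      _ = ∑ k ∈ F.biUnion (fun n => Finset.Ico (2 ^ n - 1) (2 ^ (n + 1) - 1)),
            |(S : ℕ → ℝ) k| := (Finset.sum_biUnion hdisj).symm
      _ ≤ ‖S‖ := sum_le_hasSum _ (fun k _ => abs_nonneg _) hnorm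
  -- conclude via the indicator criterion
  have hind : Summable (A.indicator fun n : ℕ => (1 : ℝ) / ((n : ℝ) + 1)) := by
    apply summable_of_sum_range_le (c := 1 + ‖S‖)
    · intro n
      exact Set.indicator_nonneg (fun m _ => by positivity) n
    · intro N
      have h1 : ∑ n ∈ Finset.range N, A.indicator (fun n : ℕ => (1 : ℝ) / ((n : ℝ) + 1)) n
          = ∑ n ∈ (Finset.range N).filter (fun n => n ∈ A), (1 : ℝ) / ((n : ℝ) + 1) := by
        rw [Finset.sum_filter]
        exact Finset.sum_congr rfl fun n _ => Set.indicator_apply _ _ _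
      set G := (Finset.range N).filter (fun n => n ∈ A) with hG
      set G' := G.filter (fun n => 1 ≤ n) with hG'
      have hsub : G ⊆ insert 0 G' := by
        intro n hn
        rcases Nat.eq_zero_or_pos n with h | h
        · simp [h]
        · exact Finset.mem_insert_of_mem (Finset.mem_filter.mpr ⟨hn, h⟩)
      have h0 : (0 : ℕ) ∉ G' := by simp [hG']
      calc ∑ n ∈ Finset.range N, A.indicator (fun n : ℕ => (1 : ℝ) / ((n : ℝ) + 1)) n
          = ∑ n ∈ G, (1 : ℝ) / ((n : ℝ) + 1) := h1
        _ ≤ ∑ n ∈ insert 0 G', (1 : ℝ) / ((n : ℝ) + 1) :=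
            Finset.sum_le_sum_of_subset_of_nonneg hsub (fun n _ _ => by positivity)
        _ = 1 / ((0 : ℝ) + 1) + ∑ n ∈ G', (1 : ℝ) / ((n : ℝ) + 1) := by
            rw [Finset.sum_insert h0]; norm_num
        _ ≤ 1 + ∑ n ∈ G', (1 : ℝ) / (n : ℝ) := by
            refine add_le_add (by norm_num) (Finset.sum_le_sum fun n hn => ?_)
            have hn1 : 1 ≤ n := (Finset.mem_filter.mp hn).2
            have hpos : (0 : ℝ) < (n : ℝ) := by exact_mod_cast hn1
            exact one_div_le_one_div_of_le hpos (by linarith)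
        _ ≤ 1 + ‖S‖ := by
            refine add_le_add_right (hFsum G' fun n hn => ?_) 1
            have h := Finset.mem_filter.mp hn
            exact ⟨h.2, (Finset.mem_filter.mp h.1).2⟩
  exact summable_subtype_iff_indicator.mpr hind
end

section
/- Let x : ℕ → ℓ₁ be the Rademacher-type sequence defined in the context, and let J_R = {X ⊆ ℕ : ∑_{i∈X} x_i converges unconditionally in ℓ₁}. Then J_R is not a summable ideal: there is no function g : ℕ → [0,∞) such that for every X ⊆ ℕ, X ∈ J_R if and only if ∑_{i∈X} g(i) < ∞. (Hence J_R is an ideal representable in ℓ₁ which is not representable in ℝ.) -/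
open Filter Topology

open Finset
open Finset

private def auxTri (n : ℕ) : ℕ := n * (n + 1) / 2

private lemma auxTri_succ (n : ℕ) : auxTri (n + 1) = auxTri n + (n + 1) := by
  unfold auxTri
  have h : (n+1) * (n+1+1) = n * (n+1) + (n+1) * 2 := by ring
  rw [h, Nat.add_mul_div_right _ _ (by norm_num : (0:ℕ) < 2)]

private lemma auxTri_strictMono : StrictMono auxTri := by
  apply strictMono_nat_of_lt_succ
  intro n; rw [auxTri_succ]; omega

/-- block decomposition uniqueness -/
private lemma auxTri_block_eq {n j n' j' : ℕ} (hj : j ≤ n) (hj' : j' ≤ n')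
    (h : auxTri n + j = auxTri n' + j') : n = n' ∧ j = j' := by
  have key : ∀ {m m' i i' : ℕ}, i ≤ m → i' ≤ m' → m < m' →
      auxTri m + i ≠ auxTri m' + i' := by
    intro m m' i i' him him' hmm
    have h1 : auxTri m + i < auxTri (m+1) := by rw [auxTri_succ]; omega
    have h2 : auxTri (m+1) ≤ auxTri m' := auxTri_strictMono.le_iff_le.mpr (by omega)
    omega
  rcases lt_trichotomy n n' with hlt | heq | hgt
  · exact absurd h (key hj hj' hlt)
  · subst heq; exact ⟨rfl, by omega⟩
  · exact absurd h.symm (key hj' hj hgt)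

/-- orthogonality of Rademacher-type sign patterns, case a < b -/
private lemma orth_lt (n a b : ℕ) (hab : a < b) (hb : b ≤ n) :
    ∑ k ∈ range (2^n), ((-1:ℝ)^(k/2^(n-a)) * (-1:ℝ)^(k/2^(n-b))) = 0 := by
  set d := 2^(n-b) with hd_def
  have hd : 0 < d := Nat.pow_pos (by norm_num)
  have hDd : 2^(n-a) = d * 2^(b-a) := by
    rw [hd_def, ← pow_add]; congr 1; omega
  have h2e : (2:ℕ) ∣ 2^(b-a) := dvd_pow_self 2 (by omega : b - a ≠ 0)
  -- key sign-flip lemma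
  have key : ∀ k : ℕ, (k / d) % 2 = 0 →
      (-1:ℝ)^((k+d)/2^(n-a)) * (-1:ℝ)^((k+d)/d)
        = -((-1:ℝ)^(k/2^(n-a)) * (-1:ℝ)^(k/d)) := by
    intro k hk
    have h1 : (k + d) / d = k / d + 1 := Nat.add_div_right k hd
    have h2 : (k + d) / 2^(n-a) = k / 2^(n-a) := by
      rw [hDd, ← Nat.div_div_eq_div_mul, ← Nat.div_div_eq_div_mul, h1]
      have : ¬ (2^(b-a) ∣ (k/d + 1)) := by
        intro hdvd
        have : (2:ℕ) ∣ (k/d + 1) := dvd_trans h2e hdvd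
        omega
      rw [Nat.succ_div, if_neg this, Nat.add_zero]
    simp only [h1, h2, pow_succ]
    ring
  apply Finset.sum_involution (fun k _ => if (k / d) % 2 = 0 then k + d else k - d)
  · -- sums to zero
    intro k hk
    by_cases hp : (k / d) % 2 = 0
    · rw [if_pos hp, key k hp]; ring
    · rw [if_neg hp]
      have hdk : d ≤ k := by
        rcases Nat.lt_or_ge k d with h | h
        · rw [Nat.div_eq_of_lt h] at hp; omega
        · exact h
      have hk' : (k - d) + d = k := Nat.sub_add_cancel hdk
      have hpar : ((k - d) / d) % 2 = 0 := by
        have := Nat.add_div_right (k - d) hd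
        rw [hk'] at this
        omega
      have h0 := key (k - d) hpar
      rw [hk'] at h0
      rw [h0]; ring
  · -- g k ≠ k
    intro k hk hF
    by_cases hp : (k / d) % 2 = 0
    · rw [if_pos hp]; omega
    · rw [if_neg hp]
      have hdk : d ≤ k := by
        rcases Nat.lt_or_ge k d with h | h
        · rw [Nat.div_eq_of_lt h] at hp; omega
        · exact h
      omega
  · -- membership
    intro k hk
    rw [Finset.mem_range] at hk ⊢
    by_cases hp : (k / d) % 2 = 0
    · rw [if_pos hp]
      have hsplit : 2^n = d * 2^b := by rw [hd_def, ← pow_add]; congr 1; omega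
      have hklt : k < 2^b * d := by rw [mul_comm, ← hsplit]; exact hk
      have hub : k / d < 2^b := (Nat.div_lt_iff_lt_mul hd).mpr hklt
      have h2b : (2:ℕ) ∣ 2^b := dvd_pow_self 2 (by omega : b ≠ 0)
      have hu2 : k / d + 2 ≤ 2^b := by omega
      have hmod := Nat.div_add_mod k d
      have hmlt : k % d < d := Nat.mod_lt _ hd
      calc k + d < d * (k/d + 2) := by nlinarith [hmod, hmlt]
        _ ≤ d * 2^b := Nat.mul_le_mul_left d hu2
        _ = 2^n := hsplit.symm
    · rw [if_neg hp]; omega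
  · -- involution
    intro k hk
    by_cases hp : (k / d) % 2 = 0
    · rw [if_pos hp]
      have h1 : (k + d) / d = k / d + 1 := Nat.add_div_right k hd
      rw [if_neg (by omega)]
      omega
    · rw [if_neg hp]
      have hdk : d ≤ k := by
        rcases Nat.lt_or_ge k d with h | h
        · rw [Nat.div_eq_of_lt h] at hp; omega
        · exact h
      have hk' : (k - d) + d = k := Nat.sub_add_cancel hdk
      have hpar : ((k - d) / d) % 2 = 0 := by
        have := Nat.add_div_right (k - d) hd
        rw [hk'] at this; omega
      rw [if_pos hpar]
      omega

private lemma orth (n a b : ℕ) (ha : a ≤ n) (hb : b ≤ n) :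
    ∑ k ∈ range (2^n), ((-1:ℝ)^(k/2^(n-a)) * (-1:ℝ)^(k/2^(n-b)))
      = if a = b then (2^n : ℝ) else 0 := by
  rcases lt_trichotomy a b with h | h | h
  · rw [if_neg (by omega), orth_lt n a b h hb]
  · subst h
    rw [if_pos rfl]
    have : ∀ k ∈ range (2^n), ((-1:ℝ)^(k/2^(n-a)) * (-1:ℝ)^(k/2^(n-a))) = 1 := by
      intro k _
      rw [← pow_add]
      exact Even.neg_one_pow ⟨_, rfl⟩
    rw [Finset.sum_congr rfl this]
    simp
  · rw [if_neg (by omega)]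
    have := orth_lt n b a h ha
    rw [← this]
    exact Finset.sum_congr rfl (fun k _ => mul_comm _ _)

private lemma lp_norm_eq_of_support (f : lp (fun _ : ℕ => ℝ) 1) (T : Finset ℕ)
    (h : ∀ m, m ∉ T → (f : ℕ → ℝ) m = 0) :
    ‖f‖ = ∑ m ∈ T, |(f : ℕ → ℝ) m| := by
  have h1 : (0:ℝ) < (1 : ENNReal).toReal := by simp
  rw [lp.norm_eq_tsum_rpow h1 f]
  simp only [ENNReal.toReal_one, Real.rpow_one, Real.norm_eq_abs, one_div_one]
  rw [tsum_eq_sum (s := T) (fun m hm => by rw [h m hm, abs_zero])]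

private lemma lp_sum_abs_le_norm (f : lp (fun _ : ℕ => ℝ) 1) (T : Finset ℕ) :
    ∑ m ∈ T, |(f : ℕ → ℝ) m| ≤ ‖f‖ := by
  have h1 : (0:ℝ) < (1 : ENNReal).toReal := by simp
  have := lp.sum_rpow_le_norm_rpow h1 f T
  simpa using this

private def HX (x : ℕ → lp (fun _ : ℕ => ℝ) 1) : Prop :=
  ∀ n : ℕ, 1 ≤ n → ∀ j : ℕ, j ≤ n → ∀ k : ℕ, k < 2 ^ n →
      (x (n * (n + 1) / 2 + j) : ℕ → ℝ) (2 ^ n - 1 + k) =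
        (-1 : ℝ) ^ (k / 2 ^ (n - j)) / ((n : ℝ) * 2 ^ n)

private def HXsupp (x : ℕ → lp (fun _ : ℕ => ℝ) 1) : Prop :=
  ∀ n : ℕ, 1 ≤ n → ∀ j : ℕ, j ≤ n → ∀ m : ℕ,
      (m < 2 ^ n - 1 ∨ 2 ^ (n + 1) - 1 ≤ m) →
      (x (n * (n + 1) / 2 + j) : ℕ → ℝ) m = 0

private lemma mem_Qn {n m : ℕ} (h : m ∈ Finset.Ico (2^n - 1) (2^(n+1) - 1)) :
    ∃ k < 2^n, m = 2^n - 1 + k := by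
  rw [Finset.mem_Ico] at h
  have h1 : (1:ℕ) ≤ 2^n := Nat.one_le_two_pow
  have h2 : (2:ℕ)^(n+1) = 2 * 2^n := by rw [pow_succ]; ring
  exact ⟨m - (2^n - 1), by omega, by omega⟩

private lemma not_mem_Qn {n m : ℕ} (h : m ∉ Finset.Ico (2^n - 1) (2^(n+1) - 1)) :
    m < 2^n - 1 ∨ 2^(n+1) - 1 ≤ m := by
  rw [Finset.mem_Ico] at h; omega

/-- Block upper bound via Cauchy–Schwarz and orthogonality. -/
private lemma block_norm_le (x : ℕ → lp (fun _ : ℕ => ℝ) 1) (hx : HX x) (hxsupp : HXsupp x)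
    (n : ℕ) (hn : 1 ≤ n) (S : Finset ℕ) (hS : S ⊆ range (n+1)) :
    ‖∑ j ∈ S, x (auxTri n + j)‖ ≤ Real.sqrt ((n:ℝ) + 1) / n := by
  have hjn : ∀ j ∈ S, j ≤ n := fun j hj => by
    have := hS hj; rw [Finset.mem_range] at this; omega
  set f := ∑ j ∈ S, x (auxTri n + j) with hf
  have hcoe : ∀ m : ℕ, (f : ℕ → ℝ) m = ∑ j ∈ S, (x (auxTri n + j) : ℕ → ℝ) m := by
    intro m
    rw [hf, lp.coeFn_sum]
    simp
  set Q : Finset ℕ := Finset.Ico (2^n - 1) (2^(n+1) - 1) with hQ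
  have hsupp : ∀ m, m ∉ Q → (f : ℕ → ℝ) m = 0 := by
    intro m hm
    rw [hcoe]
    exact Finset.sum_eq_zero fun j hj =>
      hxsupp n hn j (hjn j hj) m (not_mem_Qn hm)
  rw [lp_norm_eq_of_support f Q hsupp]
  have hcard : 2^(n+1) - 1 - (2^n - 1) = 2^n := by
    have h2 : (2:ℕ)^(n+1) = 2 * 2^n := by rw [pow_succ]; ring
    have h1 : (1:ℕ) ≤ 2^n := Nat.one_le_two_pow
    omega
  rw [hQ, Finset.sum_Ico_eq_sum_range, hcard]
  set T : ℕ → ℝ := fun k => ∑ j ∈ S, (-1:ℝ)^(k / 2^(n-j)) with hT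
  have hval : ∀ k ∈ range (2^n), |(f : ℕ → ℝ) (2^n - 1 + k)| = |T k| / ((n:ℝ) * 2^n) := by
    intro k hk
    rw [Finset.mem_range] at hk
    rw [hcoe]
    have heq : ∀ j ∈ S, (x (auxTri n + j) : ℕ → ℝ) (2^n - 1 + k)
        = (-1 : ℝ) ^ (k / 2 ^ (n - j)) / ((n : ℝ) * 2 ^ n) := fun j hj =>
      hx n hn j (hjn j hj) k hk
    rw [Finset.sum_congr rfl heq, ← Finset.sum_div, abs_div]
    simp only [hT]
    congr 1
    exact abs_of_pos (by positivity)
  rw [Finset.sum_congr rfl hval, ← Finset.sum_div]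
  have hpos : (0:ℝ) < (n:ℝ) * 2^n := by positivity
  -- Cauchy–Schwarz
  have h2 : ∑ k ∈ range (2^n), |T k|^2 = (S.card : ℝ) * 2^n := by
    have hexp : ∀ k ∈ range (2^n), |T k|^2 = ∑ a ∈ S, ∑ b ∈ S,
        ((-1:ℝ)^(k / 2^(n-a)) * (-1:ℝ)^(k / 2^(n-b))) := by
      intro k _
      rw [sq_abs, hT, sq, Finset.sum_mul_sum]
    rw [Finset.sum_congr rfl hexp]
    rw [Finset.sum_comm]
    have horth : ∀ a ∈ S, ∑ k ∈ range (2^n), ∑ b ∈ S,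
        ((-1:ℝ)^(k / 2^(n-a)) * (-1:ℝ)^(k / 2^(n-b))) = 2^n := by
      intro a ha
      rw [Finset.sum_comm]
      have hin : ∀ b ∈ S, ∑ k ∈ range (2^n),
          ((-1:ℝ)^(k / 2^(n-a)) * (-1:ℝ)^(k / 2^(n-b)))
          = if a = b then (2^n:ℝ) else 0 := fun b hb =>
        orth n a b (hjn a ha) (hjn b hb)
      rw [Finset.sum_congr rfl hin, Finset.sum_ite_eq S a (fun _ => (2^n:ℝ)), if_pos ha]
    rw [Finset.sum_congr rfl horth, Finset.sum_const, nsmul_eq_mul]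
  -- conclude
  set A := ∑ k ∈ range (2^n), |T k| with hA_def
  have hA0 : (0:ℝ) ≤ A := Finset.sum_nonneg fun k _ => abs_nonneg _
  have hCS : A^2 ≤ (S.card : ℝ) * 2^n * 2^n := by
    have h1 : (∑ k ∈ range (2^n), |T k| * 1)^2
        ≤ (∑ k ∈ range (2^n), |T k|^2) * (∑ k ∈ range (2^n), (1:ℝ)^2) :=
      Finset.sum_mul_sq_le_sq_mul_sq _ _ _
    simp only [mul_one, one_pow, Finset.sum_const, card_range, nsmul_eq_mul] at h1
    rw [h2] at h1
    calc A^2 ≤ (S.card : ℝ) * 2^n * ((2^n : ℕ) : ℝ) := h1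
      _ = (S.card : ℝ) * 2^n * 2^n := by push_cast; ring
  have hAle : A ≤ Real.sqrt ((n:ℝ)+1) * 2^n := by
    have hs := Real.sqrt_le_sqrt hCS
    rw [Real.sqrt_sq hA0] at hs
    have hrw : ((S.card : ℝ) * 2^n * 2^n) = (S.card : ℝ) * (2^n)^2 := by ring
    rw [hrw, Real.sqrt_mul (by positivity), Real.sqrt_sq (by positivity)] at hs
    refine hs.trans (mul_le_mul_of_nonneg_right ?_ (by positivity))
    apply Real.sqrt_le_sqrt
    have hc : S.card ≤ n + 1 := le_trans (Finset.card_le_card hS) (by simp)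
    exact_mod_cast hc
  have hfin : (Real.sqrt ((n:ℝ)+1) * 2^n) / ((n:ℝ) * 2^n) = Real.sqrt ((n:ℝ)+1) / n := by
    have hn0 : (n:ℝ) ≠ 0 := by positivity
    have h2n : (2:ℝ)^n ≠ 0 := by positivity
    field_simp
  calc A / ((n:ℝ) * 2^n) ≤ (Real.sqrt ((n:ℝ)+1) * 2^n) / ((n:ℝ) * 2^n) :=
        (div_le_div_iff_of_pos_right hpos).mpr hAle
    _ = Real.sqrt ((n:ℝ)+1) / n := hfin


private lemma Qn_disj {n n' m : ℕ} (hnn : n < n')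
    (h : m ∈ Finset.Ico (2^n - 1) (2^(n+1) - 1)) :
    m < 2^n' - 1 ∨ 2^(n'+1) - 1 ≤ m := by
  rw [Finset.mem_Ico] at h
  have hle : (2:ℕ)^(n+1) ≤ 2^n' := Nat.pow_le_pow_right (by norm_num) (by omega)
  omega

/-- lower bound for selector sums -/
private lemma selector_norm_ge (x : ℕ → lp (fun _ : ℕ => ℝ) 1)
    (hx : HX x) (hxsupp : HXsupp x)
    (F : Finset ℕ) (hF : ∀ n ∈ F, 1 ≤ n) (sel : ℕ → ℕ) (hsel : ∀ n ∈ F, sel n ≤ n) :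
    ∑ n ∈ F, ((n:ℝ))⁻¹ ≤ ‖∑ n ∈ F, x (auxTri n + sel n)‖ := by
  set f := ∑ n ∈ F, x (auxTri n + sel n) with hf
  have hcoe : ∀ m : ℕ, (f : ℕ → ℝ) m = ∑ n ∈ F, (x (auxTri n + sel n) : ℕ → ℝ) m := by
    intro m
    rw [hf, lp.coeFn_sum]
    simp
  classical
  set Q : ℕ → Finset ℕ := fun n => Finset.Ico (2^n - 1) (2^(n+1) - 1) with hQ
  have hdisj : (↑F : Set ℕ).PairwiseDisjoint Q := by
    intro a ha b hb hab
    simp only [Function.onFun]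
    rw [Finset.disjoint_left]
    intro m hma hmb
    rcases lt_or_gt_of_ne hab with h | h
    · have := Qn_disj h hma
      rw [hQ, Finset.mem_Ico] at hmb
      omega
    · have := Qn_disj h hmb
      rw [hQ, Finset.mem_Ico] at hma
      omega
  have hle := lp_sum_abs_le_norm f (F.biUnion Q)
  rw [Finset.sum_biUnion hdisj] at hle
  refine le_trans (le_of_eq ?_) hle
  apply Finset.sum_congr rfl
  intro n hn
  have hn1 := hF n hn
  -- each coordinate on Q n
  have hval : ∀ m ∈ Q n, |(f : ℕ → ℝ) m| = 1 / ((n:ℝ) * 2^n) := by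
    intro m hm
    have hm' : 2^n - 1 ≤ m ∧ m < 2^(n+1) - 1 := by
      rw [hQ] at hm; rw [Finset.mem_Ico] at hm; exact hm
    have hsingle : (f : ℕ → ℝ) m = (x (auxTri n + sel n) : ℕ → ℝ) m := by
      rw [hcoe]
      apply Finset.sum_eq_single_of_mem n hn
      intro n' hn' hne
      rcases lt_or_gt_of_ne hne with h | h
      · have hle2 : (2:ℕ)^(n'+1) ≤ 2^n := Nat.pow_le_pow_right (by norm_num) (by omega)
        exact hxsupp n' (hF n' hn') (sel n') (hsel n' hn') m (by omega)
      · exact hxsupp n' (hF n' hn') (sel n') (hsel n' hn') m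
          (Qn_disj h (Finset.mem_Ico.mpr hm'))
    obtain ⟨k, hk, hmk⟩ := mem_Qn (Finset.mem_Ico.mpr hm')
    have hxv : (x (auxTri n + sel n) : ℕ → ℝ) (2^n - 1 + k)
        = (-1:ℝ)^(k / 2^(n - sel n)) / ((n:ℝ) * 2^n) := hx n hn1 (sel n) (hsel n hn) k hk
    rw [hsingle, hmk, hxv, abs_div]
    rw [abs_of_pos (by positivity : (0:ℝ) < (n:ℝ) * 2^n)]
    congr 1
    rw [abs_pow, abs_neg, abs_one, one_pow]
  rw [Finset.sum_congr rfl hval, Finset.sum_const]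
  have hcard : (Q n).card = 2^n := by
    rw [hQ]
    simp only [Nat.card_Ico]
    have h2 : (2:ℕ)^(n+1) = 2 * 2^n := by rw [pow_succ]; ring
    have h1 : (1:ℕ) ≤ 2^n := Nat.one_le_two_pow
    omega
  rw [hcard, nsmul_eq_mul]
  have hn0 : (n:ℝ) ≠ 0 := by
    simp only [ne_eq, Nat.cast_eq_zero]; omega
  have h2n : (2:ℝ)^n ≠ 0 := by positivity
  push_cast
  field_simp

private lemma auxTri_ge (n : ℕ) : n ≤ auxTri n := by
  induction n with
  | zero => simp [auxTri]
  | succ k ih => rw [auxTri_succ]; omega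

/-- x is not summable over any selector set hitting blocks with divergent 1/n sums -/
private lemma not_summable_selector (x : ℕ → lp (fun _ : ℕ => ℝ) 1)
    (hx : HX x) (hxsupp : HXsupp x) (Y : Set ℕ) (hY1 : ∀ n ∈ Y, 1 ≤ n)
    (sel : ℕ → ℕ) (hsel : ∀ n ∈ Y, sel n ≤ n)
    (hdiv : ∀ N : ℕ, ∃ F : Finset ℕ, ↑F ⊆ Y ∧ (∀ n ∈ F, N ≤ n) ∧
      (1:ℝ)/2 ≤ ∑ n ∈ F, ((n:ℝ))⁻¹) :
    ¬ Summable (fun i : ((fun n => auxTri n + sel n) '' Y) => x ↑i) := by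
  intro hsum
  rw [summable_iff_vanishing] at hsum
  obtain ⟨s, hs⟩ := hsum (Metric.ball 0 (1/2)) (Metric.ball_mem_nhds 0 (by norm_num))
  classical
  set N := s.sup (fun i => (↑i : ℕ)) + 1 with hN
  obtain ⟨F, hFY, hFN, hFsum⟩ := hdiv N
  have hmem : ∀ n ∈ F, auxTri n + sel n ∈ (fun n => auxTri n + sel n) '' Y := by
    intro n hn
    exact ⟨n, hFY hn, rfl⟩
  set t : Finset ((fun n => auxTri n + sel n) '' Y : Set ℕ) :=
    F.attach.image (fun nh => ⟨auxTri nh.1 + sel nh.1, hmem nh.1 nh.2⟩) with ht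
  have hinj : ∀ (a : ℕ) (ha : a ∈ F) (b : ℕ) (hb : b ∈ F),
      auxTri a + sel a = auxTri b + sel b → a = b := by
    intro a ha b hb h
    exact (auxTri_block_eq (hsel a (hFY ha)) (hsel b (hFY hb)) h).1
  have hdisjoint : Disjoint t s := by
    rw [Finset.disjoint_left]
    intro a hat has
    rw [ht, Finset.mem_image] at hat
    obtain ⟨nh, _, rfl⟩ := hat
    have h1 : N ≤ auxTri nh.1 + sel nh.1 :=
      le_trans (le_trans (hFN nh.1 nh.2) (auxTri_ge nh.1)) (Nat.le_add_right _ _)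
    have h2 : auxTri nh.1 + sel nh.1 ≤ s.sup (fun i => (↑i : ℕ)) := by
      exact Finset.le_sup (f := fun i : ((fun n => auxTri n + sel n) '' Y : Set ℕ) => (i : ℕ)) has
    omega
  have hval := hs t hdisjoint
  rw [mem_ball_zero_iff] at hval
  have hsum_eq : ∑ i ∈ t, x ↑i = ∑ n ∈ F, x (auxTri n + sel n) := by
    rw [ht, Finset.sum_image (by
      intro a ha b hb h
      have := congrArg (fun z : ((fun n => auxTri n + sel n) '' Y : Set ℕ) => (↑z : ℕ)) h
      exact Subtype.ext (hinj a.1 a.2 b.1 b.2 this))]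
    exact Finset.sum_attach F (fun n => x (auxTri n + sel n))
  rw [hsum_eq] at hval
  have hlow := selector_norm_ge x hx hxsupp F (fun n hn => hY1 n (hFY hn)) sel
    (fun n hn => hsel n (hFY hn))
  linarith

private lemma sqrt_two_pow (n : ℕ) : Real.sqrt ((2:ℝ)^n) = (Real.sqrt 2)^n := by
  have h : ((Real.sqrt 2)^n)^2 = (2:ℝ)^n := by
    rw [← pow_mul, mul_comm, pow_mul, Real.sq_sqrt (by norm_num : (0:ℝ) ≤ 2)]
  rw [← h, Real.sqrt_sq (by positivity)]

private lemma geom_tail_le (r : ℝ) (h0 : 0 ≤ r) (h1 : r < 1) (T : ℕ) (u : Finset ℕ)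
    (hu : ∀ t ∈ u, T ≤ t) : ∑ t ∈ u, r^t ≤ r^T / (1 - r) := by
  classical
  have hsub : u ⊆ Finset.Ico T (T + (u.sup id) + 1) := by
    intro t htu
    rw [Finset.mem_Ico]
    exact ⟨hu t htu, by have := Finset.le_sup (f := id) htu; simp at this; omega⟩
  calc ∑ t ∈ u, r^t ≤ ∑ t ∈ Finset.Ico T (T + (u.sup id) + 1), r^t :=
        Finset.sum_le_sum_of_subset_of_nonneg hsub (fun i _ _ => by positivity)
    _ = ∑ i ∈ range (T + (u.sup id) + 1 - T), r^(T + i) := Finset.sum_Ico_eq_sum_range _ _ _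
    _ = r^T * ∑ i ∈ range (T + (u.sup id) + 1 - T), r^i := by
        rw [Finset.mul_sum]
        exact Finset.sum_congr rfl fun i _ => by rw [pow_add]
    _ ≤ r^T * (1 - r)⁻¹ := by
        apply mul_le_mul_of_nonneg_left _ (by positivity)
        rw [← tsum_geometric_of_lt_one h0 h1]
        exact Summable.sum_le_tsum _ (fun i _ => by positivity) (summable_geometric_of_lt_one h0 h1)
    _ = r^T / (1 - r) := by rw [div_eq_mul_inv]

private lemma summable_blocks (x : ℕ → lp (fun _ : ℕ => ℝ) 1)
    (hx : HX x) (hxsupp : HXsupp x) (m : ℕ → ℕ)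
    (hm1 : ∀ t, 1 ≤ m t) (hmg : ∀ t, 2^t ≤ m t) (hmono : StrictMono m) :
    Summable (fun i : ({ i : ℕ | ∃ t, ∃ j ≤ m t, i = auxTri (m t) + j } : Set ℕ) => x ↑i) := by
  classical
  set XA : Set ℕ := { i : ℕ | ∃ t, ∃ j ≤ m t, i = auxTri (m t) + j } with hXA
  -- the "block index" function
  set κ : ℕ → ℕ := fun i =>
    if h : ∃ t, ∃ j ≤ m t, i = auxTri (m t) + j then h.choose else 0 with hκ
  have huniq : ∀ i t j, j ≤ m t → i = auxTri (m t) + j → κ i = t := by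
    intro i t j hj hi
    have hex : ∃ t, ∃ j ≤ m t, i = auxTri (m t) + j := ⟨t, j, hj, hi⟩
    rw [hκ]
    simp only [dif_pos hex]
    obtain ⟨j', hj', hi'⟩ := hex.choose_spec
    have hi'' : auxTri (m t) + j = auxTri (m hex.choose) + j' := by rw [← hi]; exact hi'
    have := auxTri_block_eq hj' hj hi''.symm
    exact hmono.injective this.1
  set r : ℝ := (Real.sqrt 2)⁻¹ with hr
  have hs2 : (1:ℝ) < Real.sqrt 2 := by
    have : Real.sqrt 1 < Real.sqrt 2 := Real.sqrt_lt_sqrt (by norm_num) (by norm_num)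
    simpa using this
  have hr0 : 0 < r := by rw [hr]; positivity
  have hr1 : r < 1 := by rw [hr]; rw [inv_lt_one_iff₀]; right; exact hs2
  -- the per-block bound
  have hblock : ∀ tt : ℕ, ∀ S : Finset ℕ, S ⊆ range (m tt + 1) →
      ‖∑ j ∈ S, x (auxTri (m tt) + j)‖ ≤ Real.sqrt 2 * r ^ tt := by
    intro tt S hS
    refine le_trans (block_norm_le x hx hxsupp (m tt) (hm1 tt) S hS) ?_
    have hmtt1 : (1:ℝ) ≤ (m tt : ℝ) := by exact_mod_cast hm1 tt
    have h2tt : ((2:ℝ))^tt ≤ (m tt : ℝ) := by exact_mod_cast hmg tt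
    have step1 : Real.sqrt ((m tt : ℝ) + 1) ≤ Real.sqrt 2 * Real.sqrt (m tt) := by
      rw [← Real.sqrt_mul (by norm_num)]
      apply Real.sqrt_le_sqrt
      linarith
    have hmpos : (0:ℝ) < (m tt : ℝ) := by linarith
    have hsqpos : (0:ℝ) < Real.sqrt (m tt) := Real.sqrt_pos.mpr hmpos
    calc Real.sqrt ((m tt : ℝ) + 1) / (m tt : ℝ)
        ≤ (Real.sqrt 2 * Real.sqrt (m tt)) / (m tt : ℝ) :=
          (div_le_div_iff_of_pos_right hmpos).mpr step1
      _ = Real.sqrt 2 * (Real.sqrt (m tt) / (m tt : ℝ)) := by ring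
      _ = Real.sqrt 2 * (1 / Real.sqrt (m tt)) := by rw [Real.sqrt_div_self']
      _ ≤ Real.sqrt 2 * (1 / Real.sqrt (2^tt)) := by
          apply mul_le_mul_of_nonneg_left _ (by positivity)
          apply one_div_le_one_div_of_le (by positivity)
          exact Real.sqrt_le_sqrt h2tt
      _ = Real.sqrt 2 * r ^ tt := by
          rw [sqrt_two_pow, hr, one_div, inv_pow]
  -- vanishing criterion
  rw [summable_iff_vanishing]
  intro e he
  rcases Metric.mem_nhds_iff.mp he with ⟨ε, hε, hball⟩
  have h1r : (0:ℝ) < 1 - r := by linarith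
  obtain ⟨T, hT⟩ := exists_pow_lt_of_lt_one
    (show (0:ℝ) < ε * (1 - r) / (Real.sqrt 2) by positivity) hr1
  have hTbound : Real.sqrt 2 * (r ^ T / (1 - r)) < ε := by
    have hs2pos : (0:ℝ) < Real.sqrt 2 := by positivity
    have hkey : r ^ T * Real.sqrt 2 < ε * (1 - r) := by
      have h := mul_lt_mul_of_pos_right hT hs2pos
      calc r ^ T * Real.sqrt 2 < ε * (1 - r) / Real.sqrt 2 * Real.sqrt 2 := h
        _ = ε * (1 - r) := by field_simp
    calc Real.sqrt 2 * (r ^ T / (1 - r)) = (r ^ T * Real.sqrt 2) / (1 - r) := by ring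
      _ < (ε * (1 - r)) / (1 - r) := by
          apply (div_lt_div_iff_of_pos_right h1r).mpr hkey
      _ = ε := by field_simp
  refine ⟨(Finset.range (auxTri (m T))).subtype (· ∈ XA), fun t hdisj => ?_⟩
  apply hball
  rw [mem_ball_zero_iff]
  -- every element of t is at least auxTri (m T)
  have htlarge : ∀ i ∈ t, auxTri (m T) ≤ (↑i : ℕ) := by
    intro i hit
    by_contra hlt
    have : i ∈ (Finset.range (auxTri (m T))).subtype (· ∈ XA) := by
      rw [Finset.mem_subtype, Finset.mem_range]
      omega
    exact Finset.disjoint_left.mp hdisj hit this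
  -- pass to plain finset
  set v : Finset ℕ := t.image Subtype.val with hv
  have hsum_eq : (∑ i ∈ v, x i) = ∑ i ∈ t, x ↑i := by
    rw [hv]
    exact Finset.sum_image (fun a _ b _ h => Subtype.ext h)
  rw [← hsum_eq]
  -- fiberwise decomposition
  set ks : Finset ℕ := v.image κ with hks
  have hfib := Finset.sum_fiberwise_of_maps_to (s := v) (t := ks) (g := κ)
    (fun i hi => Finset.mem_image_of_mem κ hi) (fun i => x i)
  rw [← hfib]
  refine lt_of_le_of_lt (norm_sum_le _ _) ?_
  -- facts about members of v
  have hvfact : ∀ i ∈ v, ∃ t', ∃ j ≤ m t', i = auxTri (m t') + j ∧ κ i = t'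
      ∧ auxTri (m T) ≤ i := by
    intro i hiv
    rw [hv, Finset.mem_image] at hiv
    obtain ⟨a, hat, rfl⟩ := hiv
    have hprop : ∃ t', ∃ j ≤ m t', (a : ℕ) = auxTri (m t') + j := a.2
    obtain ⟨t', j, hj, hij⟩ := hprop
    exact ⟨t', j, hj, hij, huniq _ t' j hj hij, htlarge a hat⟩
  -- each fiber's block index is ≥ T, and fiber bound
  have hperfiber : ∀ tt ∈ ks,
      ‖∑ i ∈ v.filter (fun i => κ i = tt), x i‖ ≤ Real.sqrt 2 * r ^ tt ∧ T ≤ tt := by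
    intro tt htt
    rw [hks, Finset.mem_image] at htt
    obtain ⟨i0, hi0v, hi0κ⟩ := htt
    obtain ⟨t0, j0, hj0, hij0, hκ0, hlarge0⟩ := hvfact i0 hi0v
    have htt0 : tt = t0 := by rw [← hi0κ, hκ0]
    rw [htt0]
    constructor
    · -- rewrite fiber as sum over S
      set fib := v.filter (fun i => κ i = t0) with hfibd
      have hfibmem : ∀ i ∈ fib, auxTri (m t0) ≤ i ∧ i - auxTri (m t0) ≤ m t0 ∧
          i = auxTri (m t0) + (i - auxTri (m t0)) := by
        intro i hif
        rw [hfibd, Finset.mem_filter] at hif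
        obtain ⟨t', j, hj, hij, hκ', _⟩ := hvfact i hif.1
        have : t' = t0 := by rw [← hif.2, hκ']
        subst this
        constructor
        · omega
        constructor
        · omega
        · omega
      set S : Finset ℕ := fib.image (fun i => i - auxTri (m t0)) with hSd
      have hsum2 : ∑ i ∈ fib, x i = ∑ j ∈ S, x (auxTri (m t0) + j) := by
        rw [hSd, Finset.sum_image (by
          intro a ha b hb h
          have ha' := (hfibmem a ha).1
          have hb' := (hfibmem b hb).1
          beta_reduce at h
          omega)]
        apply Finset.sum_congr rfl
        intro i hif
        rw [← (hfibmem i hif).2.2]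
      rw [hsum2]
      apply hblock t0 S
      intro j hjS
      rw [hSd, Finset.mem_image] at hjS
      obtain ⟨i, hif, rfl⟩ := hjS
      rw [Finset.mem_range]
      have := (hfibmem i hif).2.1
      omega
    · -- T ≤ t0
      by_contra hlt
      push_neg at hlt
      have h1 : m t0 + 1 ≤ m T := by
        have := hmono (show t0 < T from hlt)
        omega
      have h2 : auxTri (m t0) + j0 < auxTri (m t0 + 1) := by
        rw [auxTri_succ]; omega
      have h3 : auxTri (m t0 + 1) ≤ auxTri (m T) := auxTri_strictMono.le_iff_le.mpr h1
      omega
  calc ∑ tt ∈ ks, ‖∑ i ∈ v.filter (fun i => κ i = tt), x i‖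
      ≤ ∑ tt ∈ ks, Real.sqrt 2 * r ^ tt :=
        Finset.sum_le_sum (fun tt htt => (hperfiber tt htt).1)
    _ = Real.sqrt 2 * ∑ tt ∈ ks, r ^ tt := by rw [Finset.mul_sum]
    _ ≤ Real.sqrt 2 * (r ^ T / (1 - r)) := by
        apply mul_le_mul_of_nonneg_left _ (by positivity)
        exact geom_tail_le r (le_of_lt hr0) hr1 T ks (fun tt htt => (hperfiber tt htt).2)
    _ < ε := hTbound



/-- the Rademacher ideal `J_R = {X : ∑_{i∈X} x i converges unconditionally
in ℓ₁}`, where `x : ℕ → ℓ₁` is the Rademacher-type sequence (described by the hypotheses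
`hx0`, `hx`, `hxsupp`), is not a summable ideal. -/
theorem stmt19 (x : ℕ → lp (fun _ : ℕ => ℝ) 1)
    (hx0 : ∀ k : ℕ, (x 0 : ℕ → ℝ) k = if k = 0 then 1 else 0)
    (hx : ∀ n : ℕ, 1 ≤ n → ∀ j : ℕ, j ≤ n → ∀ k : ℕ, k < 2 ^ n →
      (x (n * (n + 1) / 2 + j) : ℕ → ℝ) (2 ^ n - 1 + k) =
        (-1 : ℝ) ^ (k / 2 ^ (n - j)) / ((n : ℝ) * 2 ^ n))
    (hxsupp : ∀ n : ℕ, 1 ≤ n → ∀ j : ℕ, j ≤ n → ∀ m : ℕ,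
      (m < 2 ^ n - 1 ∨ 2 ^ (n + 1) - 1 ≤ m) →
      (x (n * (n + 1) / 2 + j) : ℕ → ℝ) m = 0) :
    ¬ ∃ g : ℕ → ℝ, (∀ i : ℕ, 0 ≤ g i) ∧
      ∀ X : Set ℕ,
        Summable (fun i : X => x i) ↔ Summable (fun i : X => g i) := by
  classical
  rintro ⟨g, hg0, hg⟩
  have hX : HX x := hx
  have hXs : HXsupp x := hxsupp
  -- choose minimizers in each block
  have hminex : ∀ n : ℕ, ∃ j, j ≤ n ∧ ∀ j', j' ≤ n →
      g (auxTri n + j) ≤ g (auxTri n + j') := by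
    intro n
    obtain ⟨j, hj, hm⟩ := Finset.exists_min_image (range (n+1))
      (fun j => g (auxTri n + j)) ⟨0, by simp⟩
    rw [Finset.mem_range] at hj
    exact ⟨j, by omega, fun j' hj' => hm j' (Finset.mem_range.mpr (by omega))⟩
  choose jmin hjmin hjminle using hminex
  set μ : ℕ → ℝ := fun n => g (auxTri n + jmin n) with hμ
  set σ : ℕ → ℝ := fun k => ∑ n ∈ Finset.Ico (2^k) (2^(k+1)), μ n with hσ
  -- Claim 3 : σ is eventually bounded below
  have claim3 : ∃ ε : ℝ, 0 < ε ∧ ∃ N : ℕ, ∀ k, N ≤ k → ε ≤ σ k := by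
    by_contra hcon
    push_neg at hcon
    have hpick : ∀ (N t : ℕ), ∃ k, N ≤ k ∧ σ k < (1/2)^t := by
      intro N t
      obtain ⟨k, hk1, hk2⟩ := hcon ((1/2)^t) (by positivity) N
      exact ⟨k, hk1, hk2⟩
    choose pick hpick1 hpick2 using hpick
    set φ : ℕ → ℕ := fun t => Nat.rec (pick 0 0) (fun t ih => pick (ih+1) (t+1)) t with hφ
    have hφs : ∀ t, φ (t+1) = pick (φ t + 1) (t+1) := fun t => rfl
    have hφmono : StrictMono φ := by
      apply strictMono_nat_of_lt_succ
      intro t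
      rw [hφs]
      have := hpick1 (φ t + 1) (t+1)
      omega
    have hφσ : ∀ t, σ (φ t) < (1/2)^t := by
      intro t
      cases t with
      | zero => exact hpick2 0 0
      | succ t => rw [hφs]; exact hpick2 _ _
    set Y : Set ℕ := {n | ∃ t, 2^(φ t) ≤ n ∧ n < 2^(φ t + 1)} with hY
    have hY1 : ∀ n ∈ Y, 1 ≤ n := by
      rintro n ⟨t, h1, _⟩
      have := Nat.one_le_two_pow (n := φ t)
      omega
    have hdiv : ∀ N : ℕ, ∃ F : Finset ℕ, ↑F ⊆ Y ∧ (∀ n ∈ F, N ≤ n) ∧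
        (1:ℝ)/2 ≤ ∑ n ∈ F, ((n:ℝ))⁻¹ := by
      intro N
      set k := φ N with hk
      refine ⟨Finset.Ico (2^k : ℕ) (2^(k+1) : ℕ), ?_, ?_, ?_⟩
      · intro n hn
        rw [Finset.mem_coe, Finset.mem_Ico] at hn
        exact ⟨N, hn.1, hn.2⟩
      · intro n hn
        rw [Finset.mem_Ico] at hn
        have h1 : N ≤ k := hφmono.le_apply
        have h2 : k < 2^k := Nat.lt_two_pow_self
        omega
      · have hterm : ∀ n ∈ Finset.Ico (2^k : ℕ) (2^(k+1) : ℕ),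
            ((2:ℝ)^(k+1))⁻¹ ≤ ((n:ℕ):ℝ)⁻¹ := by
          intro n hn
          rw [Finset.mem_Ico] at hn
          have h1n : 1 ≤ n := by
            have := Nat.one_le_two_pow (n := k); omega
          have hn0 : (0:ℝ) < (n:ℝ) := by exact_mod_cast h1n
          apply inv_anti₀ hn0
          exact_mod_cast le_of_lt hn.2
        calc (1:ℝ)/2 = ((2^k : ℕ) : ℝ) * ((2:ℝ)^(k+1))⁻¹ := by
              push_cast
              rw [pow_succ]
              field_simp
          _ = ∑ _n ∈ Finset.Ico (2^k : ℕ) (2^(k+1) : ℕ), ((2:ℝ)^(k+1))⁻¹ := by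
              rw [Finset.sum_const, Nat.card_Ico, nsmul_eq_mul]
              congr 1
              have hc : 2^(k+1) - 2^k = 2^k := by rw [pow_succ]; omega
              rw [hc]
          _ ≤ ∑ n ∈ Finset.Ico (2^k : ℕ) (2^(k+1) : ℕ), ((n:ℝ))⁻¹ :=
              Finset.sum_le_sum hterm
    have hnot := not_summable_selector x hX hXs Y hY1 jmin (fun n _ => hjmin n) hdiv
    apply hnot
    apply (hg ((fun n => auxTri n + jmin n) '' Y)).mpr
    -- g is summable over the selector set
    apply summable_of_sum_le (fun i => hg0 _)
    intro u
    set v : Finset ℕ := u.image Subtype.val with hv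
    have husum : ∑ i ∈ u, g ↑i = ∑ i ∈ v, g i := by
      rw [hv]
      exact (Finset.sum_image (fun a _ b _ h => Subtype.ext h)).symm
    rw [husum]
    set B := v.sup id with hB
    set W : Finset ℕ := (range (B+1)).biUnion
      (fun tk => (Finset.Ico (2^(φ tk)) (2^(φ tk + 1))).image
        (fun n => auxTri n + jmin n)) with hW
    have hsel_mono : StrictMono (fun n => auxTri n + jmin n) := by
      intro a b hab
      have h1 : auxTri a + jmin a < auxTri (a+1) := by rw [auxTri_succ]
                                                       have := hjmin a; omega
      have h2 : auxTri (a+1) ≤ auxTri b := auxTri_strictMono.le_iff_le.mpr (by omega)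
      have h3 : auxTri b ≤ auxTri b + jmin b := Nat.le_add_right _ _
      simp only []
      omega
    have hvW : v ⊆ W := by
      intro i hi
      rw [hv, Finset.mem_image] at hi
      obtain ⟨a, hau, rfl⟩ := hi
      obtain ⟨n, hnY, hni⟩ := a.2
      obtain ⟨t, ht1, ht2⟩ := hnY
      rw [hW, Finset.mem_biUnion]
      have hiB : (a : ℕ) ≤ B := by
        rw [hB]
        apply Finset.le_sup (f := id)
        rw [hv, Finset.mem_image]
        exact ⟨a, hau, rfl⟩
      have htB : t < B + 1 := by
        have e1 : t ≤ φ t := hφmono.le_apply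
        have e2 : φ t < 2^(φ t) := Nat.lt_two_pow_self
        have e3 : n ≤ auxTri n := auxTri_ge n
        have e4 : auxTri n + jmin n = (a:ℕ) := hni
        omega
      refine ⟨t, Finset.mem_range.mpr htB, ?_⟩
      rw [Finset.mem_image]
      exact ⟨n, Finset.mem_Ico.mpr ⟨ht1, ht2⟩, hni⟩
    have hWdisj : (↑(range (B+1)) : Set ℕ).PairwiseDisjoint
        (fun tk => (Finset.Ico (2^(φ tk)) (2^(φ tk + 1))).image
          (fun n => auxTri n + jmin n)) := by
      intro a _ b _ hab
      simp only [Function.onFun]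
      rw [Finset.disjoint_left]
      intro i hia hib
      rw [Finset.mem_image] at hia hib
      obtain ⟨n1, hn1, hi1⟩ := hia
      obtain ⟨n2, hn2, hi2⟩ := hib
      rw [Finset.mem_Ico] at hn1 hn2
      have : n1 = n2 := hsel_mono.injective (by rw [hi1, hi2])
      subst this
      rcases lt_or_gt_of_ne hab with h | h
      · have : 2^(φ a + 1) ≤ 2^(φ b) :=
          Nat.pow_le_pow_right (by norm_num) (hφmono h)
        omega
      · have : 2^(φ b + 1) ≤ 2^(φ a) :=
          Nat.pow_le_pow_right (by norm_num) (hφmono h)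
        omega
    calc ∑ i ∈ v, g i ≤ ∑ i ∈ W, g i :=
          Finset.sum_le_sum_of_subset_of_nonneg hvW (fun i _ _ => hg0 i)
      _ = ∑ tk ∈ range (B+1), ∑ n ∈ Finset.Ico (2^(φ tk)) (2^(φ tk + 1)),
            g (auxTri n + jmin n) := by
          rw [hW, Finset.sum_biUnion hWdisj]
          refine Finset.sum_congr rfl (fun tk _ => ?_)
          exact Finset.sum_image (fun a _ b _ h => hsel_mono.injective h)
      _ ≤ ∑ tk ∈ range (B+1), (1/2:ℝ)^tk := by
          apply Finset.sum_le_sum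
          intro tk _
          exact le_of_lt (hφσ tk)
      _ ≤ 2 := sum_geometric_two_le _
  obtain ⟨ε, hε, N, hN⟩ := claim3
  -- Claim 4 : pigeonhole, find heavy blocks
  have claim4 : ∀ t : ℕ, ∃ n, 2^(t+N) ≤ n ∧ n < 2^(t+N+1) ∧
      ε / ((2:ℝ)^(t+N)) ≤ μ n := by
    intro t
    by_contra hc
    push_neg at hc
    have hlt : σ (t+N) < ε := by
      rw [hσ]
      have hne : (Finset.Ico (2^(t+N)) (2^(t+N+1))).Nonempty := by
        rw [Finset.nonempty_Ico]
        have : (2:ℕ)^(t+N) < 2^(t+N+1) := Nat.pow_lt_pow_right (by norm_num) (by omega)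
        omega
      calc ∑ n ∈ Finset.Ico (2^(t+N)) (2^(t+N+1)), μ n
          < ∑ _n ∈ Finset.Ico (2^(t+N)) (2^(t+N+1)), ε / ((2:ℝ)^(t+N)) := by
            apply Finset.sum_lt_sum_of_nonempty hne
            intro n hn
            rw [Finset.mem_Ico] at hn
            exact hc n hn.1 hn.2
        _ = ε := by
            rw [Finset.sum_const, Nat.card_Ico, nsmul_eq_mul]
            have hcard : 2^(t+N+1) - 2^(t+N) = 2^(t+N) := by rw [pow_succ]; omega
            rw [hcard]
            push_cast
            field_simp
    exact absurd hlt (not_lt.mpr (hN (t+N) (by omega)))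
  choose nk hnk1 hnk2 hnk3 using claim4
  have hnkmono : StrictMono nk := by
    apply strictMono_nat_of_lt_succ
    intro t
    have h1 := hnk2 t
    have h2 := hnk1 (t+1)
    have : (2:ℕ)^(t+N+1) ≤ 2^(t+1+N) := Nat.pow_le_pow_right (by norm_num) (by omega)
    omega
  have hnk_one : ∀ t, 1 ≤ nk t := by
    intro t
    have := hnk1 t
    have : (1:ℕ) ≤ 2^(t+N) := Nat.one_le_two_pow
    omega
  have hnk_ge : ∀ t, 2^t ≤ nk t := by
    intro t
    have h1 := hnk1 t
    have : (2:ℕ)^t ≤ 2^(t+N) := Nat.pow_le_pow_right (by norm_num) (by omega)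
    omega
  -- the union of heavy blocks
  set XA : Set ℕ := { i : ℕ | ∃ t, ∃ j ≤ nk t, i = auxTri (nk t) + j } with hXA
  have hsumx : Summable (fun i : XA => x ↑i) :=
    summable_blocks x hX hXs nk hnk_one hnk_ge hnkmono
  have hsumg : Summable (fun i : XA => g ↑i) := (hg XA).mp hsumx
  set C : ℝ := ∑' i : XA, g ↑i with hC
  -- derive contradiction from unbounded partial sums
  obtain ⟨T', hT'⟩ := exists_nat_gt (C / ε)
  have hCT : C < T' * ε := by
    rw [div_lt_iff₀ hε] at hT'
    exact hT'
  set u : Finset ℕ := (range T').biUnion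
    (fun t => (range (nk t + 1)).image (fun j => auxTri (nk t) + j)) with hu
  have huXA : ∀ i ∈ u, i ∈ XA := by
    intro i hi
    rw [hu, Finset.mem_biUnion] at hi
    obtain ⟨t, _, hi⟩ := hi
    rw [Finset.mem_image] at hi
    obtain ⟨j, hj, rfl⟩ := hi
    rw [Finset.mem_range] at hj
    exact ⟨t, j, by omega, rfl⟩
  have hudisj : (↑(range T') : Set ℕ).PairwiseDisjoint
      (fun t => (range (nk t + 1)).image (fun j => auxTri (nk t) + j)) := by
    intro a _ b _ hab
    simp only [Function.onFun]
    rw [Finset.disjoint_left]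
    intro i hia hib
    rw [Finset.mem_image] at hia hib
    obtain ⟨j1, hj1, hi1⟩ := hia
    obtain ⟨j2, hj2, hi2⟩ := hib
    rw [Finset.mem_range] at hj1 hj2
    have heq : auxTri (nk a) + j1 = auxTri (nk b) + j2 := by rw [hi1, hi2]
    have := auxTri_block_eq (by omega : j1 ≤ nk a) (by omega : j2 ≤ nk b) heq
    exact hab (hnkmono.injective this.1)
  have hlower : (T' : ℝ) * ε ≤ ∑ i ∈ u, g i := by
    rw [hu, Finset.sum_biUnion hudisj]
    have hblock_low : ∀ t ∈ range T', ε ≤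
        ∑ i ∈ (range (nk t + 1)).image (fun j => auxTri (nk t) + j), g i := by
      intro t _
      rw [Finset.sum_image (fun a _ b _ h => by omega)]
      have h1 : ∑ j ∈ range (nk t + 1), μ (nk t)
          ≤ ∑ j ∈ range (nk t + 1), g (auxTri (nk t) + j) := by
        apply Finset.sum_le_sum
        intro j hj
        rw [Finset.mem_range] at hj
        exact hjminle (nk t) j (by omega)
      refine le_trans ?_ h1
      rw [Finset.sum_const, card_range, nsmul_eq_mul]
      have h2 : ((2:ℝ)^(t+N)) ≤ ((nk t + 1 : ℕ) : ℝ) := by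
        have := hnk1 t
        push_cast
        have : ((2:ℕ)^(t+N) : ℝ) ≤ (nk t : ℝ) := by exact_mod_cast hnk1 t
        push_cast at this
        linarith
      have h3 : ε / ((2:ℝ)^(t+N)) ≤ μ (nk t) := hnk3 t
      calc ε = ((2:ℝ)^(t+N)) * (ε / ((2:ℝ)^(t+N))) := by field_simp
        _ ≤ ((nk t + 1 : ℕ) : ℝ) * μ (nk t) := by
            apply mul_le_mul h2 h3 (by positivity) (by positivity)
    calc (T' : ℝ) * ε = ∑ _t ∈ range T', ε := by
          rw [Finset.sum_const, card_range, nsmul_eq_mul]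
      _ ≤ ∑ t ∈ range T', ∑ i ∈ (range (nk t + 1)).image
            (fun j => auxTri (nk t) + j), g i := Finset.sum_le_sum hblock_low
  have hupper : ∑ i ∈ u, g i ≤ C := by
    have h2 : ∑ i ∈ u.subtype (· ∈ XA), g ↑i = ∑ i ∈ u.filter (· ∈ XA), g i :=
      Finset.sum_subtype_eq_sum_filter _
    have h3 : u.filter (· ∈ XA) = u := Finset.filter_true_of_mem huXA
    have h1 : ∑ i ∈ u.subtype (· ∈ XA), g ↑i ≤ C :=
      Summable.sum_le_tsum _ (fun i _ => hg0 _) hsumg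
    rw [h2, h3] at h1
    exact h1
  linarith
end
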